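/- arXiv:2103.06143 — 8 statements merged into one kernel-verified Lean document; each statement's English description precedes it below -/
import Mathlib

section
/- Let B be a complex unital Banach algebra and let b ∈ B have polynomial growth. Then the spectrum of b is contained in ℝ (i.e., every spectral value is a real number), and there exist constants C > 0 and γ > 0 such that for every λ ∈ ℂ with Im λ ≠ 0 the element b − λ·1 is invertible in B and ‖(b − λ·1)⁻¹‖ ≤ C·(1 + |Im λ|⁻¹)^γ. -/
noncomputable section

open NormedSpace Complex

namespace PolyGrowthAux

lemma poly_exp_bound {α : ℝ} (hα : 1 ≤ α) {x : ℝ} (hx : 0 ≤ x) :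
    (1 + x) ^ α * Real.exp (-(x / 2)) ≤ (4 * α) ^ α * Real.exp 1 := by
  have h4α : (0 : ℝ) < 4 * α := by linarith
  have h1x : (0 : ℝ) < 1 + x := by linarith
  have hlog : Real.log (1 + x) ≤ Real.log (4 * α) + (1 + x) / (4 * α) := by
    have h : Real.log (1 + x) = Real.log (4 * α) + Real.log ((1 + x) / (4 * α)) := by
      rw [← Real.log_mul (ne_of_gt h4α) (by positivity)]
      congr 1
      field_simp
    rw [h]
    have h2 := Real.log_le_sub_one_of_pos (show (0:ℝ) < (1 + x) / (4 * α) by positivity)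
    linarith
  have hmul : α * Real.log (1 + x) ≤ α * Real.log (4 * α) + (1 + x) / 4 := by
    have h := mul_le_mul_of_nonneg_left hlog (by linarith : (0:ℝ) ≤ α)
    have heq : α * ((1 + x) / (4 * α)) = (1 + x) / 4 := by
      field_simp
    nlinarith [h, heq]
  have hrpow : (1 + x) ^ α = Real.exp (α * Real.log (1 + x)) := by
    rw [Real.rpow_def_of_pos h1x, mul_comm]
  have hrpow2 : (4 * α) ^ α = Real.exp (α * Real.log (4 * α)) := by
    rw [Real.rpow_def_of_pos h4α, mul_comm]
  rw [hrpow, hrpow2, ← Real.exp_add, ← Real.exp_add]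
  apply Real.exp_le_exp.2
  linarith

lemma inv_one_sub_exp_le {u : ℝ} (hu : 0 < u) :
    (1 - Real.exp (-u))⁻¹ ≤ (1 + u) / u := by
  have h0 : (0:ℝ) < 1 + u := by linarith
  have h1 : Real.exp (-u) ≤ (1 + u)⁻¹ := by
    rw [Real.exp_neg]
    exact inv_anti₀ h0 (by have := Real.add_one_le_exp u; linarith)
  have h2 : u / (1 + u) ≤ 1 - Real.exp (-u) := by
    have h : 1 - (1 + u)⁻¹ = u / (1 + u) := by field_simp; ring
    linarith [h ▸ (by linarith [h1] : 1 - (1+u)⁻¹ ≤ 1 - Real.exp (-u))]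
  calc (1 - Real.exp (-u))⁻¹ ≤ (u / (1 + u))⁻¹ := inv_anti₀ (by positivity) h2
    _ = (1 + u) / u := by rw [inv_div]

lemma term_bound {K α t : ℝ} (hK : 0 < K) (hα : 1 ≤ α) (ht : 0 < t) (n : ℕ) :
    K * (1 + (n : ℝ)) ^ α * Real.exp (-((n : ℝ) * t)) ≤
      K * (1 + t⁻¹) ^ α * ((4 * α) ^ α * Real.exp 1) * Real.exp (-(t / 2)) ^ n := by
  have hn : (0:ℝ) ≤ (n : ℝ) := Nat.cast_nonneg n
  have hrn : Real.exp (-(t / 2)) ^ n = Real.exp (-((n : ℝ) * t / 2)) := by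
    rw [← Real.exp_nat_mul]
    congr 1
    ring
  have hi : (1 + (n : ℝ)) ≤ (1 + t⁻¹) * (1 + (n : ℝ) * t) := by
    have h1 : (0:ℝ) ≤ (n:ℝ) * t := by positivity
    have h2 : (0:ℝ) ≤ t⁻¹ := by positivity
    have h3 : t⁻¹ * ((n:ℝ) * t) = (n : ℝ) := by field_simp
    nlinarith
  have hii : (1 + (n : ℝ)) ^ α ≤ (1 + t⁻¹) ^ α * (1 + (n : ℝ) * t) ^ α := by
    rw [← Real.mul_rpow (by positivity) (by positivity)]
    exact Real.rpow_le_rpow (by positivity) hi (by linarith)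
  have hiii : (1 + (n : ℝ) * t) ^ α * Real.exp (-((n : ℝ) * t / 2)) ≤
      (4 * α) ^ α * Real.exp 1 := by
    have h := poly_exp_bound hα (show (0:ℝ) ≤ (n : ℝ) * t by positivity)
    simpa using h
  have hsplit : Real.exp (-((n : ℝ) * t)) =
      Real.exp (-((n : ℝ) * t / 2)) * Real.exp (-((n : ℝ) * t / 2)) := by
    rw [← Real.exp_add]; congr 1; ring
  rw [hsplit, hrn]
  have e1 : (0:ℝ) < Real.exp (-((n : ℝ) * t / 2)) := Real.exp_pos _
  calc K * (1 + (n : ℝ)) ^ α * (Real.exp (-((n : ℝ) * t / 2)) * Real.exp (-((n : ℝ) * t / 2)))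
      ≤ K * ((1 + t⁻¹) ^ α * (1 + (n : ℝ) * t) ^ α) *
        (Real.exp (-((n : ℝ) * t / 2)) * Real.exp (-((n : ℝ) * t / 2))) := by
        apply mul_le_mul_of_nonneg_right _ (by positivity)
        exact mul_le_mul_of_nonneg_left hii (le_of_lt hK)
    _ = K * (1 + t⁻¹) ^ α * ((1 + (n : ℝ) * t) ^ α * Real.exp (-((n : ℝ) * t / 2))) *
        Real.exp (-((n : ℝ) * t / 2)) := by ring
    _ ≤ K * (1 + t⁻¹) ^ α * ((4 * α) ^ α * Real.exp 1) * Real.exp (-((n : ℝ) * t / 2)) := by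
        apply mul_le_mul_of_nonneg_right _ (le_of_lt e1)
        apply mul_le_mul_of_nonneg_left hiii (by positivity)

variable {B : Type*} [NormedRing B] [NormedAlgebra ℂ B] [CompleteSpace B]

lemma geom_inverse (q : B) (h : Summable fun n : ℕ => ‖q ^ n‖) :
    (1 - q) * (∑' n : ℕ, q ^ n) = 1 ∧ (∑' n : ℕ, q ^ n) * (1 - q) = 1 := by
  have hq : Summable fun n : ℕ => q ^ n := h.of_norm
  have h1 : ∑' n : ℕ, q ^ (n + 1) = (∑' n : ℕ, q ^ n) - 1 := by
    have h0 := Summable.tsum_eq_zero_add hq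
    rw [pow_zero] at h0
    rw [eq_sub_iff_add_eq, add_comm, ← h0]
  have hmulL : q * (∑' n : ℕ, q ^ n) = ∑' n : ℕ, q ^ (n + 1) := by
    have h2 := (ContinuousLinearMap.mul ℂ B q).map_tsum hq
    simpa [pow_succ'] using h2
  have hmulR : (∑' n : ℕ, q ^ n) * q = ∑' n : ℕ, q ^ (n + 1) := by
    have h2 := ((ContinuousLinearMap.mul ℂ B).flip q).map_tsum hq
    simpa [pow_succ] using h2
  constructor
  · rw [sub_mul, one_mul, hmulL, h1]; abel
  · rw [mul_sub, mul_one, hmulR, h1]; abel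

lemma norm_pow_le_max (x : B) (n : ℕ) : ‖x ^ n‖ ≤ max ‖(1 : B)‖ 1 * ‖x‖ ^ n := by
  cases n with
  | zero => simpa using le_max_left ‖(1 : B)‖ 1
  | succ m =>
    calc ‖x ^ (m + 1)‖ ≤ ‖x‖ ^ (m + 1) := norm_pow_le' x m.succ_pos
      _ ≤ max ‖(1 : B)‖ 1 * ‖x‖ ^ (m + 1) := by
          nlinarith [le_max_right ‖(1 : B)‖ 1, pow_nonneg (norm_nonneg x) (m + 1)]

lemma g_norm_le (x : B) (n : ℕ) :
    ‖((Nat.factorial (n + 1) : ℂ))⁻¹ • x ^ n‖ ≤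
      max ‖(1 : B)‖ 1 * (‖x‖ ^ n / (Nat.factorial n : ℝ)) := by
  rw [norm_smul, norm_inv, Complex.norm_natCast]
  have h1 : ((Nat.factorial (n + 1) : ℝ))⁻¹ ≤ ((Nat.factorial n : ℝ))⁻¹ := by
    apply inv_anti₀ (by positivity)
    exact_mod_cast Nat.factorial_le (Nat.le_succ n)
  calc ((Nat.factorial (n + 1) : ℝ))⁻¹ * ‖x ^ n‖
      ≤ ((Nat.factorial n : ℝ))⁻¹ * (max ‖(1 : B)‖ 1 * ‖x‖ ^ n) :=
        mul_le_mul h1 (norm_pow_le_max x n) (norm_nonneg _) (by positivity)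
    _ = max ‖(1 : B)‖ 1 * (‖x‖ ^ n / (Nat.factorial n : ℝ)) := by ring

lemma g_summable (x : B) :
    Summable fun n : ℕ => ((Nat.factorial (n + 1) : ℂ))⁻¹ • x ^ n := by
  apply Summable.of_norm
  exact Summable.of_nonneg_of_le (fun n => norm_nonneg _) (g_norm_le x)
    ((Real.summable_pow_div_factorial ‖x‖).mul_left _)

lemma g_norm_bound (x : B) :
    ‖∑' n : ℕ, ((Nat.factorial (n + 1) : ℂ))⁻¹ • x ^ n‖ ≤
      max ‖(1 : B)‖ 1 * Real.exp ‖x‖ := by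
  have hs : Summable fun n : ℕ => max ‖(1 : B)‖ 1 * (‖x‖ ^ n / (Nat.factorial n : ℝ)) :=
    (Real.summable_pow_div_factorial ‖x‖).mul_left _
  have hns : Summable fun n : ℕ => ‖((Nat.factorial (n + 1) : ℂ))⁻¹ • x ^ n‖ :=
    Summable.of_nonneg_of_le (fun n => norm_nonneg _) (g_norm_le x) hs
  calc ‖∑' n : ℕ, ((Nat.factorial (n + 1) : ℂ))⁻¹ • x ^ n‖
      ≤ ∑' n : ℕ, ‖((Nat.factorial (n + 1) : ℂ))⁻¹ • x ^ n‖ := norm_tsum_le_tsum_norm hns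
    _ ≤ ∑' n : ℕ, max ‖(1 : B)‖ 1 * (‖x‖ ^ n / (Nat.factorial n : ℝ)) :=
        Summable.tsum_le_tsum (g_norm_le x) hns hs
    _ = max ‖(1 : B)‖ 1 * ∑' n : ℕ, ‖x‖ ^ n / (Nat.factorial n : ℝ) := tsum_mul_left
    _ = max ‖(1 : B)‖ 1 * Real.exp ‖x‖ := by
        rw [Real.exp_eq_exp_ℝ, exp_eq_tsum_div]

lemma mul_g_eq (x : B) :
    x * ∑' n : ℕ, ((Nat.factorial (n + 1) : ℂ))⁻¹ • x ^ n = NormedSpace.exp x - 1 ∧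
    (∑' n : ℕ, ((Nat.factorial (n + 1) : ℂ))⁻¹ • x ^ n) * x = NormedSpace.exp x - 1 := by
  have hg : Summable fun n : ℕ => ((Nat.factorial (n + 1) : ℂ))⁻¹ • x ^ n := g_summable x
  have hexp : NormedSpace.exp x = ∑' n : ℕ, ((Nat.factorial n : ℂ))⁻¹ • x ^ n := by
    rw [exp_eq_tsum ℂ]
  have hsum : Summable fun n : ℕ => ((Nat.factorial n : ℂ))⁻¹ • x ^ n :=
    expSeries_summable' (𝕂 := ℂ) x
  have h0 : NormedSpace.exp x = 1 + ∑' n : ℕ, ((Nat.factorial (n + 1) : ℂ))⁻¹ • x ^ (n + 1) := by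
    rw [hexp, Summable.tsum_eq_zero_add hsum]
    simp
  constructor
  · have h2 := (ContinuousLinearMap.mul ℂ B x).map_tsum hg
    simp only [ContinuousLinearMap.mul_apply'] at h2
    rw [h2, eq_sub_iff_add_eq, add_comm, h0]
    congr 1
    apply tsum_congr
    intro n
    rw [mul_smul_comm, pow_succ']
  · have h2 := ((ContinuousLinearMap.mul ℂ B).flip x).map_tsum hg
    simp only [ContinuousLinearMap.flip_apply, ContinuousLinearMap.mul_apply'] at h2
    rw [h2, eq_sub_iff_add_eq, add_comm, h0]
    congr 1
    apply tsum_congr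
    intro n
    rw [smul_mul_assoc, pow_succ]

lemma exp_shift (bb : B) (lam : ℂ) (s : ℝ) :
    NormedSpace.exp ((I * (s : ℂ)) • (bb - algebraMap ℂ B lam)) =
      Complex.exp (-(I * (s : ℂ) * lam)) • NormedSpace.exp ((I * (s : ℂ)) • bb) := by
  have hsplit : (I * (s : ℂ)) • (bb - algebraMap ℂ B lam)
      = (I * (s : ℂ)) • bb + algebraMap ℂ B (-(I * (s : ℂ) * lam)) := by
    simp only [smul_sub, smul_add, Algebra.algebraMap_eq_smul_one, smul_smul, sub_eq_add_neg,
      neg_smul, map_neg, smul_neg]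
  letI : NormedAlgebra ℚ B := NormedAlgebra.restrictScalars ℚ ℂ B
  rw [hsplit, exp_add_of_commute (Algebra.commute_algebraMap_right _ _),
    ← algebraMap_exp_comm, ← Complex.exp_eq_exp_ℂ, Algebra.algebraMap_eq_smul_one,
    mul_smul_comm, mul_one]

lemma norm_exp_shift (bb : B) (lam : ℂ) (s : ℝ) :
    ‖NormedSpace.exp ((I * (s : ℂ)) • (bb - algebraMap ℂ B lam))‖ =
      Real.exp (s * lam.im) * ‖NormedSpace.exp ((I * (s : ℂ)) • bb)‖ := by
  rw [exp_shift, norm_smul]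
  congr 1
  rw [Complex.norm_exp]
  congr 1
  simp [Complex.mul_re, Complex.mul_im]

/-- Large `|λ|` case. -/
lemma far_case (b : B) (lam : ℂ) (hfar : ‖b‖ + 1 ≤ ‖lam‖) :
    ∃ v : B, (b - algebraMap ℂ B lam) * v = 1 ∧ v * (b - algebraMap ℂ B lam) = 1 ∧
      ‖v‖ ≤ max ‖(1 : B)‖ 1 := by
  have habs : (0:ℝ) < ‖lam‖ := by
    have h : (0:ℝ) < ‖b‖ + 1 := by positivity
    linarith
  have hlam0 : lam ≠ 0 := by
    intro h; rw [h] at habs; simp at habs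
  set q : B := lam⁻¹ • b with hq
  have hqn : ‖q‖ ≤ ‖b‖ / (‖b‖ + 1) := by
    rw [hq, norm_smul, norm_inv]
    rw [inv_mul_eq_div, div_le_div_iff₀ habs (by positivity)]
    nlinarith [norm_nonneg b]
  have hr1 : ‖b‖ / (‖b‖ + 1) < 1 := by
    rw [div_lt_one (by positivity)]; linarith
  have hrnn : (0:ℝ) ≤ ‖b‖ / (‖b‖ + 1) := by positivity
  have hle : ∀ n : ℕ, ‖q ^ n‖ ≤ max ‖(1 : B)‖ 1 * (‖b‖ / (‖b‖ + 1)) ^ n := by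
    intro n
    calc ‖q ^ n‖ ≤ max ‖(1 : B)‖ 1 * ‖q‖ ^ n := norm_pow_le_max q n
      _ ≤ max ‖(1 : B)‖ 1 * (‖b‖ / (‖b‖ + 1)) ^ n :=
          mul_le_mul_of_nonneg_left (pow_le_pow_left₀ (norm_nonneg q) hqn n)
            (le_trans zero_le_one (le_max_right _ _))
  have hbig : Summable fun n : ℕ => max ‖(1 : B)‖ 1 * (‖b‖ / (‖b‖ + 1)) ^ n :=
    (summable_geometric_of_lt_one hrnn hr1).mul_left _
  have hsum : Summable fun n : ℕ => ‖q ^ n‖ :=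
    Summable.of_nonneg_of_le (fun n => norm_nonneg _) hle hbig
  set S : B := ∑' n : ℕ, q ^ n with hS
  obtain ⟨hgi1, hgi2⟩ := geom_inverse q hsum
  have hw : b - algebraMap ℂ B lam = (-lam) • (1 - q) := by
    rw [smul_sub, hq, smul_smul, Algebra.algebraMap_eq_smul_one, neg_mul,
      mul_inv_cancel₀ hlam0, neg_smul]
    rw [neg_smul, one_smul, sub_neg_eq_add]
    abel
  refine ⟨(-lam)⁻¹ • S, ?_, ?_, ?_⟩
  · rw [hw, smul_mul_smul_comm, mul_inv_cancel₀ (neg_ne_zero.mpr hlam0), hgi1, one_smul]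
  · rw [hw, smul_mul_smul_comm, inv_mul_cancel₀ (neg_ne_zero.mpr hlam0), hgi2, one_smul]
  · rw [norm_smul, norm_inv, norm_neg]
    have hSb : ‖S‖ ≤ max ‖(1 : B)‖ 1 * (‖b‖ + 1) := by
      calc ‖S‖ ≤ ∑' n : ℕ, ‖q ^ n‖ := norm_tsum_le_tsum_norm hsum
        _ ≤ ∑' n : ℕ, max ‖(1 : B)‖ 1 * (‖b‖ / (‖b‖ + 1)) ^ n :=
            Summable.tsum_le_tsum hle hsum hbig
        _ = max ‖(1 : B)‖ 1 * (1 - ‖b‖ / (‖b‖ + 1))⁻¹ := by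
            rw [tsum_mul_left, tsum_geometric_of_lt_one hrnn hr1]
        _ = max ‖(1 : B)‖ 1 * (‖b‖ + 1) := by
            congr 1
            rw [one_sub_div (by positivity : (‖b‖:ℝ) + 1 ≠ 0)]
            simp [inv_div]
    calc ‖lam‖⁻¹ * ‖S‖ ≤ (‖b‖ + 1)⁻¹ * (max ‖(1 : B)‖ 1 * (‖b‖ + 1)) := by
          apply mul_le_mul (inv_anti₀ (by positivity) hfar) hSb (norm_nonneg _) (by positivity)
      _ = max ‖(1 : B)‖ 1 := by field_simp

lemma near_case (b : B) {K α : ℝ} (hK : 0 < K) (hα : 1 ≤ α)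
    (hb : ∀ s : ℝ, ‖NormedSpace.exp ((I * (s : ℂ)) • b)‖ ≤ K * (1 + |s|) ^ α)
    (lam : ℂ) (hlam : lam.im ≠ 0) (hnear : ‖lam‖ ≤ ‖b‖ + 1) :
    ∃ v : B, (b - algebraMap ℂ B lam) * v = 1 ∧ v * (b - algebraMap ℂ B lam) = 1 ∧
      ‖v‖ ≤ max ‖(1 : B)‖ 1 * Real.exp (‖b‖ + (‖b‖ + 1) * ‖(1 : B)‖) *
        (2 * K * ((4 * α) ^ α * Real.exp 1)) * (1 + |lam.im|⁻¹) ^ (α + 1) := by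
  set t : ℝ := |lam.im| with htdef
  have ht : 0 < t := abs_pos.mpr hlam
  set ε : ℝ := if 0 < lam.im then (-1 : ℝ) else 1 with hε
  have hεabs : |ε| = 1 := by
    rw [hε]; split_ifs <;> simp
  have hεim : ε * lam.im = -t := by
    rw [hε, htdef]
    split_ifs with h
    · rw [abs_of_pos h]; ring
    · rw [abs_of_neg (lt_of_le_of_ne (not_lt.mp h) hlam)]; ring
  set w : B := b - algebraMap ℂ B lam with hwdef
  set c : ℂ := I * (ε : ℝ) with hcdef
  have hcabs : ‖c‖ = 1 := by
    simp [hcdef, hεabs]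
  have hc0 : c ≠ 0 := by
    intro h
    rw [h] at hcabs; simp at hcabs
  set x : B := c • w with hxdef
  set q : B := NormedSpace.exp x with hqdef
  -- ‖q ^ n‖ bound
  have hqpow : ∀ n : ℕ, q ^ n = NormedSpace.exp ((I * ((ε * n : ℝ) : ℂ)) • w) := by
    intro n
    letI : NormedAlgebra ℚ B := NormedAlgebra.restrictScalars ℚ ℂ B
    rw [hqdef, ← NormedSpace.exp_nsmul]
    congr 1
    rw [hxdef, smul_comm, ← Nat.cast_smul_eq_nsmul ℂ n w, smul_smul]
    congr 1
    push_cast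
    ring
  have hqbound : ∀ n : ℕ, ‖q ^ n‖ ≤ K * (1 + (n : ℝ)) ^ α * Real.exp (-((n : ℝ) * t)) := by
    intro n
    rw [hqpow n, hwdef, norm_exp_shift b lam (ε * n)]
    have him : ε * n * lam.im = -((n : ℝ) * t) := by
      calc ε * n * lam.im = (n : ℝ) * (ε * lam.im) := by ring
        _ = -((n : ℝ) * t) := by rw [hεim]; ring
    rw [him]
    calc Real.exp (-((n : ℝ) * t)) * ‖NormedSpace.exp ((I * ((ε * n : ℝ) : ℂ)) • b)‖
        ≤ Real.exp (-((n : ℝ) * t)) * (K * (1 + |ε * n|) ^ α) :=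
          mul_le_mul_of_nonneg_left (hb (ε * n)) (le_of_lt (Real.exp_pos _))
      _ = K * (1 + (n : ℝ)) ^ α * Real.exp (-((n : ℝ) * t)) := by
          rw [abs_mul, hεabs, one_mul, Nat.abs_cast]
          ring
  -- geometric-type summability
  set r : ℝ := Real.exp (-(t / 2)) with hrdef
  have hr0 : 0 ≤ r := le_of_lt (Real.exp_pos _)
  have hr1 : r < 1 := by
    rw [hrdef]
    exact Real.exp_lt_one_iff.mpr (by linarith)
  set Dc : ℝ := (4 * α) ^ α * Real.exp 1 with hDdef
  have hDpos : 0 < Dc := by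
    rw [hDdef]
    have : (0:ℝ) < (4 * α) ^ α := Real.rpow_pos_of_pos (by linarith) _
    positivity
  have hle : ∀ n : ℕ, ‖q ^ n‖ ≤ K * (1 + t⁻¹) ^ α * Dc * r ^ n := fun n =>
    (hqbound n).trans (term_bound hK hα ht n)
  have hbig : Summable fun n : ℕ => K * (1 + t⁻¹) ^ α * Dc * r ^ n :=
    (summable_geometric_of_lt_one hr0 hr1).mul_left _
  have hsum : Summable fun n : ℕ => ‖q ^ n‖ :=
    Summable.of_nonneg_of_le (fun n => norm_nonneg _) hle hbig
  set S : B := ∑' n : ℕ, q ^ n with hSdef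
  obtain ⟨hgi1, hgi2⟩ := geom_inverse q hsum
  have hSb : ‖S‖ ≤ 2 * K * Dc * (1 + t⁻¹) ^ (α + 1) := by
    have h1 : ‖S‖ ≤ K * (1 + t⁻¹) ^ α * Dc * (1 - r)⁻¹ := by
      calc ‖S‖ ≤ ∑' n : ℕ, ‖q ^ n‖ := norm_tsum_le_tsum_norm hsum
        _ ≤ ∑' n : ℕ, K * (1 + t⁻¹) ^ α * Dc * r ^ n := Summable.tsum_le_tsum hle hsum hbig
        _ = K * (1 + t⁻¹) ^ α * Dc * (1 - r)⁻¹ := by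
            rw [tsum_mul_left, tsum_geometric_of_lt_one hr0 hr1]
    have h2 : (1 - r)⁻¹ ≤ 2 * (1 + t⁻¹) := by
      have h3 := inv_one_sub_exp_le (show (0:ℝ) < t / 2 by linarith)
      have h4 : (1 + t / 2) / (t / 2) = 1 + 2 / t := by
        field_simp
        ring
      have h5 : (1:ℝ) + 2 / t ≤ 2 * (1 + t⁻¹) := by
        rw [div_eq_mul_inv]
        nlinarith [inv_nonneg.mpr (le_of_lt ht)]
      rw [hrdef]
      calc (1 - Real.exp (-(t / 2)))⁻¹ ≤ (1 + t / 2) / (t / 2) := h3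
        _ = 1 + 2 / t := h4
        _ ≤ 2 * (1 + t⁻¹) := h5
    have hpos : (0:ℝ) ≤ K * (1 + t⁻¹) ^ α * Dc := by positivity
    calc ‖S‖ ≤ K * (1 + t⁻¹) ^ α * Dc * (1 - r)⁻¹ := h1
      _ ≤ K * (1 + t⁻¹) ^ α * Dc * (2 * (1 + t⁻¹)) := mul_le_mul_of_nonneg_left h2 hpos
      _ = 2 * K * Dc * ((1 + t⁻¹) ^ α * (1 + t⁻¹)) := by ring
      _ = 2 * K * Dc * (1 + t⁻¹) ^ (α + 1) := by
          rw [Real.rpow_add_one (by positivity : (1:ℝ) + t⁻¹ ≠ 0)]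
  -- the factor g
  set g : B := ∑' n : ℕ, ((Nat.factorial (n + 1) : ℂ))⁻¹ • x ^ n with hgdef
  obtain ⟨hxg, hgx⟩ := mul_g_eq x
  have hxnorm : ‖x‖ ≤ ‖b‖ + (‖b‖ + 1) * ‖(1 : B)‖ := by
    rw [hxdef, norm_smul, hcabs, one_mul, hwdef]
    calc ‖b - algebraMap ℂ B lam‖ ≤ ‖b‖ + ‖algebraMap ℂ B lam‖ := norm_sub_le _ _
      _ ≤ ‖b‖ + (‖b‖ + 1) * ‖(1 : B)‖ := by
          rw [norm_algebraMap]
          have := mul_le_mul_of_nonneg_right hnear (norm_nonneg (1 : B))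
          linarith
  have hgb : ‖g‖ ≤ max ‖(1 : B)‖ 1 * Real.exp (‖b‖ + (‖b‖ + 1) * ‖(1 : B)‖) := by
    calc ‖g‖ ≤ max ‖(1 : B)‖ 1 * Real.exp ‖x‖ := g_norm_bound x
      _ ≤ max ‖(1 : B)‖ 1 * Real.exp (‖b‖ + (‖b‖ + 1) * ‖(1 : B)‖) := by
          apply mul_le_mul_of_nonneg_left (Real.exp_le_exp.mpr hxnorm)
            (le_trans zero_le_one (le_max_right _ _))
  set h : B := (-c) • g with hhdef
  have hwh : w * h = 1 - q := by
    rw [hhdef, mul_smul_comm, neg_smul, ← smul_mul_assoc]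
    rw [← hxdef, hxg, hqdef]
    abel
  have hhw : h * w = 1 - q := by
    rw [hhdef, smul_mul_assoc, neg_smul]
    rw [show c • (g * w) = g * x from by rw [hxdef, ← mul_smul_comm]]
    rw [hgx, hqdef]
    abel
  have e1 : w * (h * S) = 1 := by rw [← mul_assoc, hwh, hSdef, hgi1]
  have e2 : (S * h) * w = 1 := by rw [mul_assoc, hhw, hSdef, hgi2]
  have heq : S * h = h * S := by
    have h5 : S * h = (S * h) * (w * (h * S)) := by rw [e1, mul_one]
    rw [h5, ← mul_assoc, e2, one_mul]
  have hhn : ‖h‖ = ‖g‖ := by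
    rw [hhdef, norm_smul, norm_neg, hcabs, one_mul]
  refine ⟨h * S, e1, ?_, ?_⟩
  · rw [← heq, e2]
  · calc ‖h * S‖ ≤ ‖h‖ * ‖S‖ := norm_mul_le _ _
      _ = ‖g‖ * ‖S‖ := by rw [hhn]
      _ ≤ max ‖(1 : B)‖ 1 * Real.exp (‖b‖ + (‖b‖ + 1) * ‖(1 : B)‖) *
            (2 * K * Dc * (1 + t⁻¹) ^ (α + 1)) :=
          mul_le_mul hgb hSb (norm_nonneg _) (by positivity)
      _ = max ‖(1 : B)‖ 1 * Real.exp (‖b‖ + (‖b‖ + 1) * ‖(1 : B)‖) *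
            (2 * K * Dc) * (1 + t⁻¹) ^ (α + 1) := by ring

end PolyGrowthAux

/-- An element `b` of a complex unital Banach algebra has *polynomial growth* if
`‖exp (i s b)‖ ≤ K (1 + |s|)^α` for all real `s`, for some `K > 0`, `α ≥ 0`. -/
def HasPolynomialGrowth {B : Type*} [NormedRing B] [NormedAlgebra ℂ B] (b : B) : Prop :=
  ∃ K α : ℝ, 0 < K ∧ 0 ≤ α ∧
    ∀ s : ℝ, ‖NormedSpace.exp ((Complex.I * (s : ℂ)) • b)‖ ≤ K * (1 + |s|) ^ α

/-- (1) ⇒ (3) of the Colojoară–Foiaş type characterization: a polynomial growth element has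
real spectrum and a polynomially bounded resolvent off the real axis. -/
theorem polynomialGrowth_spectrum_real_and_resolvent_bound
    {B : Type*} [NormedRing B] [NormedAlgebra ℂ B] [CompleteSpace B]
    (b : B) (hb : HasPolynomialGrowth b) :
    (∀ lam ∈ spectrum ℂ b, lam.im = 0) ∧
    ∃ C γ : ℝ, 0 < C ∧ 0 < γ ∧ ∀ lam : ℂ, lam.im ≠ 0 →
      IsUnit (b - algebraMap ℂ B lam) ∧
      ‖Ring.inverse (b - algebraMap ℂ B lam)‖ ≤ C * (1 + |lam.im|⁻¹) ^ γ := by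
  obtain ⟨K, α₀, hK, hα₀, hb₀⟩ := hb
  set α : ℝ := α₀ + 1 with hαdef
  have hα : 1 ≤ α := by simp [hαdef]; linarith
  have hbd : ∀ s : ℝ, ‖NormedSpace.exp ((Complex.I * (s : ℂ)) • b)‖ ≤ K * (1 + |s|) ^ α := by
    intro s
    refine (hb₀ s).trans ?_
    apply mul_le_mul_of_nonneg_left _ (le_of_lt hK)
    exact Real.rpow_le_rpow_of_exponent_le (by linarith [abs_nonneg s]) (by simp [hαdef])
  set N1 : ℝ := max ‖(1 : B)‖ 1 with hN1def
  have hN1 : 0 < N1 := lt_of_lt_of_le one_pos (le_max_right _ _)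
  set E : ℝ := Real.exp (‖b‖ + (‖b‖ + 1) * ‖(1 : B)‖) with hEdef
  have hE : 0 < E := Real.exp_pos _
  set Dc : ℝ := (4 * α) ^ α * Real.exp 1 with hDdef
  have hDc : 0 < Dc := by
    have h1 : (0:ℝ) < (4 * α) ^ α := Real.rpow_pos_of_pos (by linarith) _
    have h2 : (0:ℝ) < Real.exp 1 := Real.exp_pos _
    rw [hDdef]; positivity
  set Cf : ℝ := N1 * E * (2 * K * Dc) + N1 with hCfdef
  have hCf : 0 < Cf := by
    have h1 : 0 ≤ N1 * E * (2 * K * Dc) := by positivity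
    rw [hCfdef]; linarith
  have key : ∀ lam : ℂ, lam.im ≠ 0 →
      ∃ v : B, (b - algebraMap ℂ B lam) * v = 1 ∧ v * (b - algebraMap ℂ B lam) = 1 ∧
        ‖v‖ ≤ Cf * (1 + |lam.im|⁻¹) ^ (α + 1) := by
    intro lam him
    have hXpos : (0:ℝ) ≤ (1 + |lam.im|⁻¹) ^ (α + 1) :=
      Real.rpow_nonneg (by positivity) _
    have hX1 : (1:ℝ) ≤ (1 + |lam.im|⁻¹) ^ (α + 1) := by
      calc (1:ℝ) = 1 ^ (α + 1) := (Real.one_rpow _).symm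
        _ ≤ (1 + |lam.im|⁻¹) ^ (α + 1) :=
            Real.rpow_le_rpow zero_le_one (le_add_of_nonneg_right (by positivity)) (by linarith)
    rcases le_or_gt (‖lam‖) (‖b‖ + 1) with hnear | hfar
    · obtain ⟨v, hv1, hv2, hvb⟩ := PolyGrowthAux.near_case b hK hα hbd lam him hnear
      refine ⟨v, hv1, hv2, hvb.trans ?_⟩
      apply mul_le_mul_of_nonneg_right _ hXpos
      have hnn : 0 ≤ N1 * E * (2 * K * Dc) := by positivity
      calc N1 * E * (2 * K * Dc) ≤ N1 * E * (2 * K * Dc) + N1 := by linarith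
        _ = Cf := hCfdef.symm
    · obtain ⟨v, hv1, hv2, hvb⟩ := PolyGrowthAux.far_case b lam (le_of_lt hfar)
      refine ⟨v, hv1, hv2, ?_⟩
      calc ‖v‖ ≤ N1 := hvb
        _ ≤ Cf := by
            have hnn : 0 ≤ N1 * E * (2 * K * Dc) := by positivity
            rw [hCfdef]; linarith
        _ = Cf * 1 := (mul_one _).symm
        _ ≤ Cf * (1 + |lam.im|⁻¹) ^ (α + 1) := by
            apply mul_le_mul_of_nonneg_left hX1 (le_of_lt hCf)
  have unitOf : ∀ lam : ℂ, lam.im ≠ 0 → IsUnit (b - algebraMap ℂ B lam) ∧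
      ‖Ring.inverse (b - algebraMap ℂ B lam)‖ ≤ Cf * (1 + |lam.im|⁻¹) ^ (α + 1) := by
    intro lam him
    obtain ⟨v, hv1, hv2, hvb⟩ := key lam him
    refine ⟨⟨⟨_, v, hv1, hv2⟩, rfl⟩, ?_⟩
    have hinv : Ring.inverse (b - algebraMap ℂ B lam) = v := by
      rw [show (b - algebraMap ℂ B lam) = ((⟨_, v, hv1, hv2⟩ : Bˣ) : B) from rfl,
        Ring.inverse_unit]
      rfl
    rw [hinv]
    exact hvb
  constructor
  · intro lam hmem
    by_contra him
    apply spectrum.notMem_iff.mpr _ hmem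
    have h1 := (unitOf lam him).1
    rw [← neg_sub]
    exact h1.neg
  · exact ⟨Cf, α + 1, hCf, by linarith, fun lam him => unitOf lam him⟩
end
end

section
/- Let B be a complex unital Banach algebra and let b ∈ B be topologically nilpotent, i.e., lim_{n→∞} ‖bⁿ‖^{1/n} = 0 (equivalently, the spectral radius of b is 0). If b has polynomial growth, then b is nilpotent: there exists n ≥ 1 with bⁿ = 0. -/
noncomputable section

open Complex Filter NormedSpace Set
open scoped Nat NNReal

/-- From `‖b^n‖^(1/n) → 0` we get geometric bounds `‖b^n‖ ≤ C ε^n` for every `ε > 0`. -/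
lemma pow_norm_bound {B : Type*} [NormedRing B] (b : B)
    (htop : Filter.Tendsto (fun n : ℕ => ‖b ^ n‖ ^ ((n : ℝ)⁻¹)) Filter.atTop (nhds 0)) :
    ∀ ε : ℝ, 0 < ε → ∃ C : ℝ, 1 ≤ C ∧ ∀ n : ℕ, ‖b ^ n‖ ≤ C * ε ^ n := by
  intro ε hε
  have hev : ∀ᶠ n : ℕ in atTop, ‖b ^ n‖ ^ ((n : ℝ)⁻¹) < ε :=
    htop.eventually_lt_const hε
  obtain ⟨N, hN⟩ := eventually_atTop.1 hev
  set M := max N 1 with hM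
  refine ⟨1 + ∑ k ∈ Finset.range M, ‖b ^ k‖ * (ε⁻¹) ^ k, ?_, ?_⟩
  · have : (0:ℝ) ≤ ∑ k ∈ Finset.range M, ‖b ^ k‖ * (ε⁻¹) ^ k :=
      Finset.sum_nonneg fun k _ => mul_nonneg (norm_nonneg _) (pow_nonneg (by positivity) _)
    linarith
  · intro n
    rcases lt_or_ge n M with hn | hn
    · have hmem : n ∈ Finset.range M := Finset.mem_range.2 hn
      have hle : ‖b ^ n‖ * (ε⁻¹) ^ n ≤ ∑ k ∈ Finset.range M, ‖b ^ k‖ * (ε⁻¹) ^ k :=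
        Finset.single_le_sum (f := fun k => ‖b ^ k‖ * (ε⁻¹) ^ k)
          (fun k _ => mul_nonneg (norm_nonneg _) (pow_nonneg (by positivity) _)) hmem
      have h1 : ‖b ^ n‖ = ‖b ^ n‖ * (ε⁻¹) ^ n * ε ^ n := by
        rw [mul_assoc, ← mul_pow, inv_mul_cancel₀ hε.ne', one_pow, mul_one]
      rw [h1]
      have hεn : (0:ℝ) ≤ ε ^ n := by positivity
      nlinarith [hεn, hle]
    · have hnN : N ≤ n := le_trans (le_max_left _ _) hn
      have hn1 : 1 ≤ n := le_trans (le_max_right _ _) hn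
      have h := hN n hnN
      have hb0 : (0:ℝ) ≤ ‖b ^ n‖ := norm_nonneg _
      have key : ‖b ^ n‖ ≤ ε ^ n := by
        have : (‖b ^ n‖ ^ ((n : ℝ)⁻¹)) ^ n ≤ ε ^ n :=
          pow_le_pow_left₀ (Real.rpow_nonneg hb0 _) h.le _
        have hne : ((n : ℝ)) ≠ 0 := Nat.cast_ne_zero.2 (by omega)
        rwa [← Real.rpow_natCast (‖b ^ n‖ ^ ((n : ℝ)⁻¹)) n, ← Real.rpow_mul hb0,
          inv_mul_cancel₀ hne, Real.rpow_one] at this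
      calc ‖b ^ n‖ ≤ ε ^ n := key
        _ ≤ _ := by
          have hεn : (0:ℝ) ≤ ε ^ n := by positivity
          have hsum : (0:ℝ) ≤ ∑ k ∈ Finset.range M, ‖b ^ k‖ * (ε⁻¹) ^ k :=
            Finset.sum_nonneg fun k _ => mul_nonneg (norm_nonneg _) (pow_nonneg (by positivity) _)
          nlinarith

/-- Geometric bounds on powers give subexponential growth of `exp (z • b)`. -/
lemma exp_growth_bound {B : Type*} [NormedRing B] [NormedAlgebra ℂ B] [CompleteSpace B]
    {b : B} {ε C : ℝ} (hε : 0 < ε) (hC : 0 ≤ C) (h : ∀ n : ℕ, ‖b ^ n‖ ≤ C * ε ^ n) (z : ℂ) :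
    ‖NormedSpace.exp (z • b)‖ ≤ C * Real.exp (ε * ‖z‖) := by
  have hsum : HasSum (fun n : ℕ => C * ((ε * ‖z‖) ^ n / n !))
      (C * Real.exp (ε * ‖z‖)) := by
    have := NormedSpace.expSeries_div_hasSum_exp (ε * ‖z‖)
    rw [← Real.exp_eq_exp_ℝ] at this
    exact this.mul_left C
  have hterm : ∀ n : ℕ, ‖((n ! : ℂ))⁻¹ • (z • b) ^ n‖ ≤ C * ((ε * ‖z‖) ^ n / n !) := by
    intro n
    rw [smul_pow, norm_smul, norm_smul, norm_inv, norm_pow]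
    have h1 : ‖(n ! : ℂ)‖ = (n ! : ℝ) := by
      simp [Complex.norm_natCast]
    rw [h1]
    have h2 : ‖z‖ = ‖z‖ := rfl
    rw [h2, mul_pow]
    have hfac : (0:ℝ) < (n ! : ℝ) := by positivity
    rw [div_eq_mul_inv]
    calc (n ! : ℝ)⁻¹ * (‖z‖ ^ n * ‖b ^ n‖)
        ≤ (n ! : ℝ)⁻¹ * (‖z‖ ^ n * (C * ε ^ n)) := by
          have := h n
          have hz : (0:ℝ) ≤ ‖z‖ ^ n := by positivity
          have : ‖z‖ ^ n * ‖b ^ n‖ ≤ ‖z‖ ^ n * (C * ε ^ n) :=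
            mul_le_mul_of_nonneg_left (h n) hz
          exact mul_le_mul_of_nonneg_left this (by positivity)
      _ = C * (ε ^ n * ‖z‖ ^ n * (n ! : ℝ)⁻¹) := by ring
  rw [NormedSpace.exp_eq_tsum (𝕂 := ℂ)]
  exact (tsum_of_norm_bounded hsum hterm).trans (le_of_eq rfl)

/-- Phragmén–Lindelöf: an entire function of minimal exponential type that is polynomially
bounded on the imaginary axis is polynomially bounded on the right half-plane. -/
lemma half_plane_poly_bound {B : Type*} [NormedAddCommGroup B] [NormedSpace ℂ B]
    {f : ℂ → B} (hd : Differentiable ℂ f)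
    (hgrow : ∀ ε : ℝ, 0 < ε → ∃ C : ℝ, 0 ≤ C ∧ ∀ z : ℂ, ‖f z‖ ≤ C * Real.exp (ε * ‖z‖))
    {K α : ℝ} (hK : 0 ≤ K) (hα : 0 ≤ α) (m : ℕ) (hm : α ≤ m)
    (him : ∀ s : ℝ, ‖f ((s : ℂ) * Complex.I)‖ ≤ K * (1 + |s|) ^ α) :
    ∀ z : ℂ, 0 ≤ z.re → ‖f z‖ ≤ K * 2 ^ α * (1 + ‖z‖) ^ m := by
  intro z hz
  have habs1 : (1:ℝ) ≤ ‖z + 1‖ := by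
    have : (1:ℝ) ≤ (z + 1).re := by simp [Complex.add_re]; linarith
    exact this.trans (Complex.re_le_norm _)
  have key : ∀ ε : ℝ, 0 < ε →
      ‖f z‖ ≤ K * 2 ^ α * ‖z + 1‖ ^ m * Real.exp (ε * z.re) := by
    intro ε hε
    set g : ℂ → B := fun w => (Complex.exp (-(ε : ℂ) * w) / (w + 1) ^ m) • f w with hg
    have hgnorm : ∀ w : ℂ, ‖g w‖ =
        Real.exp (-(ε * w.re)) / ‖w + 1‖ ^ m * ‖f w‖ := by
      intro w
      rw [hg]
      simp only [norm_smul]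
      rw [norm_div, Complex.norm_exp, norm_pow]
      congr 3
      simp
    -- differentiability
    have hga : ∀ w : ℂ, 0 ≤ w.re → DifferentiableAt ℂ g w := by
      intro w hw
      have hne : w + 1 ≠ 0 := by
        intro h
        have := congrArg Complex.re h
        simp [Complex.add_re] at this
        linarith
      have h1 : DifferentiableAt ℂ (fun w : ℂ => Complex.exp (-(ε : ℂ) * w)) w :=
        (differentiableAt_id.const_mul _).cexp
      have h2 : DifferentiableAt ℂ (fun w : ℂ => (w + 1) ^ m) w :=
        (differentiableAt_id.add_const 1).pow m
      exact ((h1.div h2 (pow_ne_zero _ hne)).smul (hd w))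
    have hdc : DiffContOnCl ℂ g {w : ℂ | 0 < w.re} := by
      refine ⟨fun w hw => (hga w (le_of_lt hw)).differentiableWithinAt, ?_⟩
      rw [Complex.closure_setOf_lt_re]
      exact fun w hw => (hga w hw).continuousAt.continuousWithinAt
    -- exponential bound
    obtain ⟨C₁, hC₁, hC₁b⟩ := hgrow 1 one_pos
    have hexp : ∃ c < (2 : ℝ), ∃ B',
        g =O[Bornology.cobounded ℂ ⊓ Filter.principal {w : ℂ | 0 < w.re}]
          fun w => Real.exp (B' * ‖w‖ ^ c) := by
      refine ⟨1, one_lt_two, 1, Asymptotics.IsBigO.of_bound C₁ ?_⟩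
      rw [Filter.eventually_inf_principal]
      refine Filter.Eventually.of_forall fun w hw => ?_
      have hw' : (0:ℝ) < w.re := hw
      have habsw : (1:ℝ) ≤ ‖w + 1‖ := by
        have : (1:ℝ) ≤ (w + 1).re := by simp [Complex.add_re]; linarith
        exact this.trans (Complex.re_le_norm _)
      rw [hgnorm w]
      have e1 : Real.exp (-(ε * w.re)) ≤ 1 := by
        rw [Real.exp_le_one_iff]
        nlinarith
      have e2 : (1:ℝ) ≤ ‖w + 1‖ ^ m := one_le_pow₀ habsw
      have e3 : ‖f w‖ ≤ C₁ * Real.exp (1 * ‖w‖) := hC₁b w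
      have e4 : Real.exp (-(ε * w.re)) / ‖w + 1‖ ^ m ≤ 1 := by
        rw [div_le_one (by positivity)]
        exact e1.trans e2
      calc Real.exp (-(ε * w.re)) / ‖w + 1‖ ^ m * ‖f w‖
          ≤ 1 * ‖f w‖ := mul_le_mul_of_nonneg_right e4 (norm_nonneg _)
        _ = ‖f w‖ := one_mul _
        _ ≤ C₁ * Real.exp (1 * ‖w‖) := e3
        _ ≤ C₁ * ‖Real.exp (1 * ‖w‖ ^ (1:ℝ))‖ := by
            rw [Real.rpow_one, Real.norm_eq_abs, abs_of_pos (Real.exp_pos _)]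
    -- boundedness on the real axis
    obtain ⟨C₂, hC₂, hC₂b⟩ := hgrow (ε / 2) (by positivity)
    have hre : IsBoundedUnder (· ≤ ·) atTop fun x : ℝ => ‖g x‖ := by
      refine ⟨C₂, ?_⟩
      rw [Filter.eventually_map]
      filter_upwards [Filter.eventually_ge_atTop (0 : ℝ)] with x hx
      rw [hgnorm x]
      have hre1 : (x : ℂ).re = x := Complex.ofReal_re x
      have habsx : ‖(x : ℂ)‖ = x := by
        rw [Complex.norm_real, Real.norm_eq_abs, _root_.abs_of_nonneg hx]
      have e2 : (1:ℝ) ≤ ‖(x : ℂ) + 1‖ ^ m := by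
        refine one_le_pow₀ ?_
        have : (1:ℝ) ≤ ((x:ℂ) + 1).re := by simp [Complex.add_re]; linarith
        exact this.trans (Complex.re_le_norm _)
      have e3 : ‖f x‖ ≤ C₂ * Real.exp (ε / 2 * x) := by
        have := hC₂b x
        rwa [habsx] at this
      rw [hre1]
      have e4 : Real.exp (-(ε * x)) / ‖(x:ℂ) + 1‖ ^ m ≤ Real.exp (-(ε * x)) := by
        rw [div_le_iff₀ (by positivity)]
        nlinarith [Real.exp_pos (-(ε * x))]
      calc Real.exp (-(ε * x)) / ‖(x:ℂ) + 1‖ ^ m * ‖f x‖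
          ≤ Real.exp (-(ε * x)) * (C₂ * Real.exp (ε / 2 * x)) := by
            apply mul_le_mul e4 e3 (norm_nonneg _) (Real.exp_pos _).le
        _ = C₂ * Real.exp (-(ε * x) + ε / 2 * x) := by rw [Real.exp_add]; ring
        _ ≤ C₂ * 1 := by
            refine mul_le_mul_of_nonneg_left ?_ hC₂
            rw [Real.exp_le_one_iff]
            nlinarith
        _ = C₂ := mul_one _
    -- bound on the imaginary axis
    have him' : ∀ x : ℝ, ‖g ((x : ℂ) * Complex.I)‖ ≤ K * 2 ^ α := by
      intro x
      rw [hgnorm]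
      have hre0 : ((x : ℂ) * Complex.I).re = 0 := by simp
      rw [hre0]
      have hA1 : (1:ℝ) ≤ ‖(x : ℂ) * Complex.I + 1‖ := by
        have : ((x : ℂ) * Complex.I + 1).re = 1 := by simp
        calc (1:ℝ) = ((x : ℂ) * Complex.I + 1).re := this.symm
          _ ≤ _ := Complex.re_le_norm _
      have hA2 : |x| ≤ ‖(x : ℂ) * Complex.I + 1‖ := by
        have h1 : ((x : ℂ) * Complex.I + 1).im = x := by simp
        calc |x| = |((x : ℂ) * Complex.I + 1).im| := by rw [h1]
          _ ≤ _ := Complex.abs_im_le_norm _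
      set A := ‖(x : ℂ) * Complex.I + 1‖ with hA
      have hbound : (1 + |x|) ^ α ≤ 2 ^ α * A ^ m := by
        have h1 : (1 + |x| : ℝ) ≤ 2 * A := by linarith
        have h2 : ((1 + |x|) : ℝ) ^ α ≤ (2 * A) ^ α :=
          Real.rpow_le_rpow (by positivity) h1 hα
        have h3 : (2 * A) ^ α = 2 ^ α * A ^ α :=
          Real.mul_rpow (by norm_num) (by linarith)
        have h4 : A ^ α ≤ A ^ (m : ℝ) := Real.rpow_le_rpow_of_exponent_le hA1 (by exact_mod_cast hm)
        have h5 : A ^ (m : ℝ) = A ^ m := Real.rpow_natCast A m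
        calc ((1 + |x|) : ℝ) ^ α ≤ 2 ^ α * A ^ α := by rw [← h3]; exact h2
          _ ≤ 2 ^ α * A ^ m := by
              rw [← h5]
              exact mul_le_mul_of_nonneg_left h4 (by positivity)
      have hAm : (0:ℝ) < A ^ m := by positivity
      have hfx := him x
      calc Real.exp (-(ε * 0)) / A ^ m * ‖f ((x:ℂ) * Complex.I)‖
          ≤ 1 / A ^ m * (K * (1 + |x|) ^ α) := by
            apply mul_le_mul _ hfx (norm_nonneg _) (by positivity)
            rw [mul_zero, neg_zero, Real.exp_zero]
        _ ≤ 1 / A ^ m * (K * (2 ^ α * A ^ m)) := by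
            apply mul_le_mul_of_nonneg_left _ (by positivity)
            exact mul_le_mul_of_nonneg_left hbound hK
        _ = K * 2 ^ α * (A ^ m / A ^ m) := by ring
        _ = K * 2 ^ α := by rw [div_self hAm.ne']; ring
    -- apply Phragmén–Lindelöf
    have hPL : ‖g z‖ ≤ K * 2 ^ α :=
      PhragmenLindelof.right_half_plane_of_bounded_on_real hdc hexp hre him' hz
    rw [hgnorm z] at hPL
    have hAm : (0:ℝ) < ‖z + 1‖ ^ m := by positivity
    have hE : (0:ℝ) < Real.exp (-(ε * z.re)) := Real.exp_pos _
    have : ‖f z‖ * Real.exp (-(ε * z.re)) ≤ K * 2 ^ α * ‖z + 1‖ ^ m := by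
      rw [div_mul_eq_mul_div, div_le_iff₀ hAm] at hPL
      calc ‖f z‖ * Real.exp (-(ε * z.re)) = Real.exp (-(ε * z.re)) * ‖f z‖ := by ring
        _ ≤ _ := hPL
    have hEinv : Real.exp (-(ε * z.re)) * Real.exp (ε * z.re) = 1 := by
      rw [← Real.exp_add]; simp
    calc ‖f z‖ = ‖f z‖ * Real.exp (-(ε * z.re)) * Real.exp (ε * z.re) := by
          rw [mul_assoc, hEinv, mul_one]
      _ ≤ K * 2 ^ α * ‖z + 1‖ ^ m * Real.exp (ε * z.re) :=
          mul_le_mul_of_nonneg_right this (Real.exp_pos _).le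
  -- let ε → 0
  have hlim : ‖f z‖ ≤ K * 2 ^ α * ‖z + 1‖ ^ m := by
    have htend : Filter.Tendsto
        (fun ε : ℝ => K * 2 ^ α * ‖z + 1‖ ^ m * Real.exp (ε * z.re))
        (nhdsWithin 0 (Set.Ioi 0)) (nhds (K * 2 ^ α * ‖z + 1‖ ^ m)) := by
      have hc : Continuous fun ε : ℝ =>
          K * 2 ^ α * ‖z + 1‖ ^ m * Real.exp (ε * z.re) := by
        continuity
      have := hc.tendsto 0
      simp only [zero_mul, Real.exp_zero, mul_one] at this
      exact this.mono_left nhdsWithin_le_nhds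
    refine ge_of_tendsto htend ?_
    filter_upwards [self_mem_nhdsWithin] with ε hε
    exact key ε hε
  refine hlim.trans ?_
  have h1 : ‖z + 1‖ ≤ 1 + ‖z‖ := by
    calc ‖z + 1‖ ≤ ‖z‖ + ‖(1:ℂ)‖ := norm_add_le z 1
      _ = 1 + ‖z‖ := by rw [norm_one]; ring
  have h2 : ‖z + 1‖ ^ m ≤ (1 + ‖z‖) ^ m :=
    pow_le_pow_left₀ (norm_nonneg _) h1 m
  exact mul_le_mul_of_nonneg_left h2 (by positivity)

/-- If `exp (z • b)` is polynomially bounded of degree `m` on all of `ℂ`, then `b ^ (m+1) = 0`. -/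
lemma pow_eq_zero_of_poly_bound {B : Type*} [NormedRing B] [NormedAlgebra ℂ B] [CompleteSpace B]
    (b : B) {C₀ : ℝ} (hC₀ : 0 ≤ C₀) (m : ℕ)
    (hP : ∀ z : ℂ, ‖NormedSpace.exp (z • b)‖ ≤ C₀ * (1 + ‖z‖) ^ m) :
    b ^ (m + 1) = 0 := by
  set f : ℂ → B := fun z => NormedSpace.exp (z • b) with hf
  have hd : Differentiable ℂ f := fun z => (hasDerivAt_exp_smul_const b z).differentiableAt
  set q : FormalMultilinearSeries ℂ ℂ B :=
    fun n => ContinuousMultilinearMap.mkPiRing ℂ (Fin n) (((n ! : ℂ))⁻¹ • b ^ n) with hq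
  have hqnorm : ∀ n : ℕ, ‖q n‖ = ((n ! : ℝ))⁻¹ * ‖b ^ n‖ := by
    intro n
    rw [hq]
    rw [ContinuousMultilinearMap.norm_mkPiRing, norm_smul, norm_inv]
    congr 1
    simp
  have hqsum : ∀ y : ℂ, HasSum (fun n => q n fun _ => y) (f y) := by
    intro y
    have h0 := NormedSpace.exp_series_hasSum_exp' (𝕂 := ℂ) (y • b)
    have heq : (fun n => q n fun _ : Fin n => y) =
        fun n : ℕ => ((n ! : ℂ))⁻¹ • (y • b) ^ n := by
      funext n
      rw [hq]
      rw [ContinuousMultilinearMap.mkPiRing_apply]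
      rw [smul_pow, Finset.prod_const, Finset.card_univ, Fintype.card_fin]
      rw [smul_smul, smul_smul, mul_comm]
    rw [heq]
    exact h0
  have hq1 : HasFPowerSeriesOnBall f q 0 1 := by
    refine ⟨?_, one_pos, ?_⟩
    · refine FormalMultilinearSeries.le_radius_of_summable q ?_
      have hsum2 : Summable fun n : ℕ => (‖(1:B)‖ + 1) * (‖b‖ ^ n / n !) :=
        (Real.summable_pow_div_factorial ‖b‖).mul_left _
      refine Summable.of_nonneg_of_le (fun n => by positivity) (fun n => ?_) hsum2
      simp only [NNReal.coe_one, one_pow, mul_one]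
      rw [hqnorm n]
      rcases Nat.eq_zero_or_pos n with h0 | h0
      · subst h0
        simp only [Nat.factorial_zero, Nat.cast_one, inv_one, pow_zero, one_mul]
        norm_num
      · have h1 : ‖b ^ n‖ ≤ ‖b‖ ^ n := norm_pow_le' b h0
        have h2 : ((n ! : ℝ))⁻¹ * ‖b ^ n‖ ≤ ((n ! : ℝ))⁻¹ * ‖b‖ ^ n := by
          apply mul_le_mul_of_nonneg_left h1 (by positivity)
        refine h2.trans ?_
        rw [div_eq_mul_inv, mul_comm (‖b‖ ^ n)]
        have : (1:ℝ) ≤ ‖(1:B)‖ + 1 := by nlinarith [norm_nonneg (1:B)]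
        nlinarith [inv_nonneg.2 (Nat.cast_nonneg (n !) : (0:ℝ) ≤ (n ! : ℝ)),
          pow_nonneg (norm_nonneg b) n,
          mul_nonneg (inv_nonneg.2 (Nat.cast_nonneg (n !) : (0:ℝ) ≤ (n ! : ℝ)))
            (pow_nonneg (norm_nonneg b) n)]
    · intro y hy
      rw [zero_add]
      exact hqsum y
  have hqat : HasFPowerSeriesAt f q 0 := ⟨1, hq1⟩
  -- Cauchy estimates
  have hmain : ∀ R : ℝ, 1 ≤ R → ∀ n : ℕ,
      ((n ! : ℝ))⁻¹ * ‖b ^ n‖ ≤ C₀ * (1 + R) ^ m * (R⁻¹) ^ n := by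
    intro R hR1 n
    have hR0 : (0:ℝ) < R := lt_of_lt_of_le one_pos hR1
    set Rn : ℝ≥0 := ⟨R, hR0.le⟩ with hRn
    have hRn0 : 0 < Rn := by
      rw [← NNReal.coe_lt_coe]
      exact hR0
    have hball := hd.hasFPowerSeriesOnBall 0 hRn0
    have heq : q = cauchyPowerSeries f 0 (Rn : ℝ) :=
      hqat.eq_formalMultilinearSeries hball.hasFPowerSeriesAt
    have hb1 := norm_cauchyPowerSeries_le f 0 (Rn : ℝ) n
    rw [← heq, hqnorm n] at hb1
    have hcoe : ((Rn : ℝ)) = R := rfl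
    rw [hcoe] at hb1
    have habs : |R| = R := abs_of_pos hR0
    rw [habs] at hb1
    refine hb1.trans ?_
    have hIb : (∫ θ : ℝ in (0)..2 * Real.pi, ‖f (circleMap 0 R θ)‖) ≤
        2 * Real.pi * (C₀ * (1 + R) ^ m) := by
      have hpt : ∀ θ ∈ Set.Icc (0:ℝ) (2 * Real.pi),
          ‖f (circleMap 0 R θ)‖ ≤ C₀ * (1 + R) ^ m := by
        intro θ _
        have := hP (circleMap 0 R θ)
        rwa [norm_circleMap_zero, habs] at this
      have hint : IntervalIntegrable (fun θ : ℝ => ‖f (circleMap 0 R θ)‖)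
          MeasureTheory.volume 0 (2 * Real.pi) :=
        ((hd.continuous.comp (continuous_circleMap 0 R)).norm).intervalIntegrable _ _
      have := intervalIntegral.integral_mono_on (by positivity : (0:ℝ) ≤ 2 * Real.pi)
        hint (intervalIntegrable_const) hpt
      rwa [intervalIntegral.integral_const, smul_eq_mul, sub_zero] at this
    have hpi : (0:ℝ) < 2 * Real.pi := by positivity
    have hRin : (0:ℝ) ≤ (R⁻¹) ^ n := by positivity
    calc (2 * Real.pi)⁻¹ * (∫ θ : ℝ in (0)..2 * Real.pi, ‖f (circleMap 0 R θ)‖) * (R⁻¹) ^ n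
        ≤ (2 * Real.pi)⁻¹ * (2 * Real.pi * (C₀ * (1 + R) ^ m)) * (R⁻¹) ^ n := by
          apply mul_le_mul_of_nonneg_right _ hRin
          exact mul_le_mul_of_nonneg_left hIb (by positivity)
      _ = C₀ * (1 + R) ^ m * (R⁻¹) ^ n := by
          rw [← mul_assoc, inv_mul_cancel₀ hpi.ne', one_mul]
  -- conclude
  have hfin : ∀ R : ℝ, 1 ≤ R →
      ‖b ^ (m + 1)‖ ≤ ((m + 1)! : ℝ) * C₀ * 2 ^ m * R⁻¹ := by
    intro R hR1
    have hR0 : (0:ℝ) < R := lt_of_lt_of_le one_pos hR1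
    have h1 := hmain R hR1 (m + 1)
    have h2 : (1 + R) ^ m ≤ (2 * R) ^ m :=
      pow_le_pow_left₀ (by linarith) (by linarith) m
    have hRR : R ^ m * R⁻¹ ^ m = 1 := by
      rw [← mul_pow, mul_inv_cancel₀ hR0.ne', one_pow]
    have hid : (2 * R) ^ m * (R⁻¹) ^ (m + 1) = 2 ^ m * R⁻¹ := by
      calc (2 * R) ^ m * (R⁻¹) ^ (m + 1) = 2 ^ m * (R ^ m * R⁻¹ ^ m) * R⁻¹ := by
            rw [mul_pow, pow_succ]; ring
        _ = 2 ^ m * R⁻¹ := by rw [hRR, mul_one]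
    have h3 : C₀ * (1 + R) ^ m * (R⁻¹) ^ (m + 1) ≤ C₀ * (2 ^ m * R⁻¹) := by
      rw [← hid, mul_assoc]
      exact mul_le_mul_of_nonneg_left
        (mul_le_mul_of_nonneg_right h2 (by positivity)) hC₀
    have h4 : ((m + 1)! : ℝ)⁻¹ * ‖b ^ (m + 1)‖ ≤ C₀ * (2 ^ m * R⁻¹) := le_trans h1 h3
    have hfacpos : (0:ℝ) < ((m + 1)! : ℝ) := by positivity
    rw [inv_mul_le_iff₀ hfacpos] at h4
    calc ‖b ^ (m + 1)‖ ≤ ((m + 1)! : ℝ) * (C₀ * (2 ^ m * R⁻¹)) := h4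
      _ = ((m + 1)! : ℝ) * C₀ * 2 ^ m * R⁻¹ := by ring
  have htend : Filter.Tendsto (fun R : ℝ => ((m + 1)! : ℝ) * C₀ * 2 ^ m * R⁻¹)
      Filter.atTop (nhds 0) := by
    have := tendsto_inv_atTop_zero.const_mul (((m + 1)! : ℝ) * C₀ * 2 ^ m)
    simpa using this
  have hle : ‖b ^ (m + 1)‖ ≤ 0 := by
    refine ge_of_tendsto htend ?_
    filter_upwards [Filter.eventually_ge_atTop (1:ℝ)] with R hR
    exact hfin R hR
  exact norm_le_zero_iff.1 hle

/-- A topologically nilpotent element of polynomial growth in a complex Banach algebra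
is nilpotent. -/
theorem isNilpotent_of_topologicallyNilpotent_of_polynomialGrowth
    {B : Type*} [NormedRing B] [NormedAlgebra ℂ B] [CompleteSpace B] (b : B)
    (htop : Filter.Tendsto (fun n : ℕ => ‖b ^ n‖ ^ ((n : ℝ)⁻¹)) Filter.atTop (nhds 0))
    (hb : HasPolynomialGrowth b) :
    ∃ n : ℕ, 1 ≤ n ∧ b ^ n = 0 := by
  obtain ⟨K, α, hK, hα, hgr⟩ := hb
  set m : ℕ := ⌈α⌉₊ with hmdef
  have hαm : α ≤ (m : ℝ) := Nat.le_ceil α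
  have hpow := pow_norm_bound b htop
  have hpowneg : ∀ ε : ℝ, 0 < ε → ∃ C : ℝ, 1 ≤ C ∧ ∀ n : ℕ, ‖(-b) ^ n‖ ≤ C * ε ^ n := by
    intro ε hε
    obtain ⟨C, hC1, hCb⟩ := hpow ε hε
    refine ⟨C, hC1, fun n => ?_⟩
    rcases Nat.even_or_odd n with h | h
    · rw [h.neg_pow]; exact hCb n
    · rw [h.neg_pow, norm_neg]; exact hCb n
  have hgrow : ∀ c : B, (∀ ε : ℝ, 0 < ε → ∃ C : ℝ, 1 ≤ C ∧ ∀ n : ℕ, ‖c ^ n‖ ≤ C * ε ^ n) →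
      ∀ ε : ℝ, 0 < ε → ∃ C : ℝ, 0 ≤ C ∧
        ∀ z : ℂ, ‖NormedSpace.exp (z • c)‖ ≤ C * Real.exp (ε * ‖z‖) := by
    intro c hc ε hε
    obtain ⟨C, hC1, hCb⟩ := hc ε hε
    exact ⟨C, by linarith, fun z => exp_growth_bound hε (by linarith) hCb z⟩
  have hd₁ : Differentiable ℂ fun z : ℂ => NormedSpace.exp (z • b) :=
    fun z => (hasDerivAt_exp_smul_const b z).differentiableAt
  have hd₂ : Differentiable ℂ fun z : ℂ => NormedSpace.exp (z • (-b)) :=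
    fun z => (hasDerivAt_exp_smul_const (-b) z).differentiableAt
  have him₁ : ∀ s : ℝ, ‖NormedSpace.exp (((s : ℂ) * Complex.I) • b)‖ ≤ K * (1 + |s|) ^ α := by
    intro s
    have := hgr s
    rwa [mul_comm (Complex.I) ((s : ℂ))] at this
  have him₂ : ∀ s : ℝ, ‖NormedSpace.exp (((s : ℂ) * Complex.I) • (-b))‖ ≤ K * (1 + |s|) ^ α := by
    intro s
    have heq : ((s : ℂ) * Complex.I) • (-b) = (Complex.I * ((-s : ℝ) : ℂ)) • b := by
      rw [smul_neg, ← neg_smul]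
      congr 1
      push_cast
      ring
    rw [heq]
    have := hgr (-s)
    rwa [abs_neg] at this
  have hb₁ := half_plane_poly_bound hd₁ (hgrow b hpow) hK.le hα m hαm him₁
  have hb₂ := half_plane_poly_bound hd₂ (hgrow (-b) hpowneg) hK.le hα m hαm him₂
  have hP : ∀ z : ℂ, ‖NormedSpace.exp (z • b)‖ ≤ K * 2 ^ α * (1 + ‖z‖) ^ m := by
    intro z
    rcases le_total 0 z.re with h | h
    · exact hb₁ z h
    · have hre : 0 ≤ (-z).re := by rw [Complex.neg_re]; linarith
      have h2 := hb₂ (-z) hre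
      have heq : (-z) • (-b) = z • b := by rw [smul_neg, neg_smul, neg_neg]
      rwa [heq, norm_neg] at h2
  have hC₀ : (0:ℝ) ≤ K * 2 ^ α := by positivity
  have hz := pow_eq_zero_of_poly_bound b hC₀ m hP
  exact ⟨m + 1, Nat.le_add_left 1 m, hz⟩
end
end

section
/- Let B be a complex unital Banach algebra and let b ∈ B have polynomial growth. Then the spectrum of b is contained in ℝ, i.e., every λ in the spectrum of b satisfies Im λ = 0. -/
noncomputable section

/-- The spectrum of a polynomial growth element of a complex Banach algebra is real. -/
theorem spectrum_real_of_polynomialGrowth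
    {B : Type*} [NormedRing B] [NormedAlgebra ℂ B] [CompleteSpace B]
    (b : B) (hb : HasPolynomialGrowth b) :
    ∀ lam ∈ spectrum ℂ b, lam.im = 0 := by
  intro lam hlam
  obtain ⟨K, α, hK, hα, hbound⟩ := hb
  by_contra hc
  -- key estimate : for s ≠ 0, `exp (-(s * lam.im)) ≤ K * ‖1‖ * (1+|s|)^α`
  have key : ∀ s : ℝ, s ≠ 0 →
      Real.exp (-(s * lam.im)) ≤ K * ‖(1 : B)‖ * (1 + |s|) ^ α := by
    intro s hs
    have hz : (Complex.I * (s : ℂ)) ≠ 0 :=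
      mul_ne_zero Complex.I_ne_zero (by exact_mod_cast hs)
    set r : ℂˣ := Units.mk0 _ hz with hr
    have hmem : Complex.I * (s : ℂ) * lam ∈ spectrum ℂ ((Complex.I * (s : ℂ)) • b) := by
      have : (r : ℂ) • b = (Complex.I * (s : ℂ)) • b := rfl
      rw [← this, ← Units.smul_def, spectrum.unit_smul_eq_smul]
      have := Set.smul_mem_smul_set (a := r) hlam
      exact this
    have hexp := spectrum.exp_mem_exp (𝕜 := ℂ) ((Complex.I * (s : ℂ)) • b) hmem
    have hnorm : ‖NormedSpace.exp (Complex.I * (s : ℂ) * lam)‖ ≤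
        ‖NormedSpace.exp ((Complex.I * (s : ℂ)) • b)‖ * ‖(1 : B)‖ :=
      spectrum.norm_le_norm_mul_of_mem hexp
    have h1 : ‖NormedSpace.exp (Complex.I * (s : ℂ) * lam)‖ = Real.exp (-(s * lam.im)) := by
      rw [← Complex.exp_eq_exp_ℂ, Complex.norm_exp]
      congr 1
      simp [Complex.mul_re, Complex.mul_im]
    calc Real.exp (-(s * lam.im))
        ≤ ‖NormedSpace.exp ((Complex.I * (s : ℂ)) • b)‖ * ‖(1 : B)‖ := by
          rw [← h1]; exact hnorm
      _ ≤ K * (1 + |s|) ^ α * ‖(1 : B)‖ := by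
          exact mul_le_mul_of_nonneg_right (hbound s) (norm_nonneg _)
      _ = K * ‖(1 : B)‖ * (1 + |s|) ^ α := by ring
  -- specialize to the direction that makes the exponent positive
  set c : ℝ := |lam.im| with hcdef
  have hcpos : 0 < c := abs_pos.mpr hc
  have key' : ∀ t : ℝ, 0 < t → Real.exp (c * t) ≤ K * ‖(1 : B)‖ * (1 + t) ^ α := by
    intro t ht
    rcases le_or_gt lam.im 0 with him | him
    · have := key t ht.ne'
      have hct : -(t * lam.im) = c * t := by
        rw [hcdef, abs_of_nonpos him]; ring
      rw [hct] at this
      simpa [abs_of_pos ht] using this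
    · have := key (-t) (by simpa using ht.ne')
      have hct : -(-t * lam.im) = c * t := by
        rw [hcdef, abs_of_pos him]; ring
      rw [hct] at this
      simpa [abs_of_pos ht, abs_neg] using this
  -- contradiction with `exp (c t) / t ^ α → ∞`
  have htends := tendsto_exp_mul_div_rpow_atTop α c hcpos
  have hev := (htends.eventually_gt_atTop (K * ‖(1 : B)‖ * 2 ^ α)).and
    (Filter.eventually_ge_atTop (1 : ℝ))
  obtain ⟨t, hgt, ht1⟩ := hev.exists
  have ht0 : 0 < t := lt_of_lt_of_le one_pos ht1
  have hb2 : (1 + t) ^ α ≤ 2 ^ α * t ^ α := by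
    have h12 : (1 : ℝ) + t ≤ 2 * t := by linarith
    calc (1 + t) ^ α ≤ (2 * t) ^ α :=
          Real.rpow_le_rpow (by linarith) h12 hα
      _ = 2 ^ α * t ^ α := Real.mul_rpow (by norm_num) ht0.le
  have hle : Real.exp (c * t) ≤ K * ‖(1 : B)‖ * (2 ^ α * t ^ α) :=
    (key' t ht0).trans (by
      exact mul_le_mul_of_nonneg_left hb2 (by positivity))
  have htpow : 0 < t ^ α := Real.rpow_pos_of_pos ht0 α
  have : Real.exp (c * t) / t ^ α ≤ K * ‖(1 : B)‖ * 2 ^ α := by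
    rw [div_le_iff₀ htpow]
    calc Real.exp (c * t) ≤ K * ‖(1 : B)‖ * (2 ^ α * t ^ α) := hle
      _ = K * ‖(1 : B)‖ * 2 ^ α * t ^ α := by ring
  exact absurd this (not_le.mpr hgt)
end
end

section
/- Let B be a complex unital Banach algebra, let I ⊆ B be a two-sided ideal, and suppose there exists p ≥ 1 such that every product of p elements of I is zero. Let d ∈ B have polynomial growth and let t ∈ I. Then b = d + t has polynomial growth; in particular, the spectrum of b is contained in ℝ and b − λ·1 is invertible for every λ ∈ ℂ with Im λ ≠ 0. -/
noncomputable section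

namespace PolyGrowthAux

open NormedSpace intervalIntegral MeasureTheory Filter

set_option linter.unusedSectionVars false

variable {B : Type*} [NormedRing B] [NormedAlgebra ℂ B] [CompleteSpace B]

/-- `expc b s = exp (i s b)`. -/
def expc (b : B) (s : ℝ) : B := NormedSpace.exp ((Complex.I * (s : ℂ)) • b)

lemma expc_add (b : B) (s u : ℝ) : expc b (s + u) = expc b s * expc b u := by
  letI : NormedAlgebra ℚ B := .restrictScalars ℚ ℂ B
  rw [expc, expc, expc, ← NormedSpace.exp_add_of_commute
    (((Commute.refl b).smul_left _).smul_right _)]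
  congr 1
  push_cast
  rw [mul_add, add_smul]

lemma expc_zero (b : B) : expc b 0 = 1 := by
  simp [expc, NormedSpace.exp_zero]

lemma expc_mul_expc_neg (b : B) (s : ℝ) : expc b s * expc b (-s) = 1 := by
  rw [← expc_add, add_neg_cancel, expc_zero]

lemma continuous_expc (b : B) : Continuous (expc b) := by
  letI : NormedAlgebra ℚ B := .restrictScalars ℚ ℂ B
  exact NormedSpace.exp_continuous.comp (by fun_prop)

lemma hasDerivAt_expc (b : B) (s : ℝ) :
    HasDerivAt (expc b) (Complex.I • (b * expc b s)) s := by
  have h1 : HasDerivAt (fun z : ℂ => NormedSpace.exp (z • b))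
      (b * NormedSpace.exp ((Complex.I * (s : ℂ)) • b)) (Complex.I * (s : ℂ)) :=
    hasDerivAt_exp_smul_const' b _
  have h2 : HasDerivAt (fun s : ℝ => Complex.I * (s : ℂ)) Complex.I s := by
    simpa using (Complex.ofRealCLM.hasDerivAt (x := s)).const_mul Complex.I
  have := HasDerivAt.scomp (x := s) h1 h2
  exact this

lemma commute_expc (b c : B) (h : Commute b c) (s : ℝ) : Commute b (expc c s) :=
  (h.smul_right _).exp_right

/-- The iterated Duhamel terms. -/
def E (d t : B) : ℕ → ℝ → B
  | 0 => fun s => expc d s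
  | (k+1) => fun s =>
      expc d s * ∫ u in (0:ℝ)..s, expc d (-u) * (Complex.I • (t * E d t k u))

lemma continuous_E (d t : B) (k : ℕ) : Continuous (E d t k) := by
  induction k with
  | zero => exact continuous_expc d
  | succ k ih =>
      have hg : Continuous fun u : ℝ => expc d (-u) * (Complex.I • (t * E d t k u)) :=
        ((continuous_expc d).comp continuous_neg).mul ((continuous_const.mul ih).const_smul _)
      exact (continuous_expc d).mul <| intervalIntegral.continuous_primitive
        (fun a b => hg.intervalIntegrable a b) 0

lemma hasDerivAt_E_zero (d t : B) (s : ℝ) :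
    HasDerivAt (E d t 0) (Complex.I • (d * E d t 0 s)) s := hasDerivAt_expc d s

lemma hasDerivAt_E_succ (d t : B) (k : ℕ) (s : ℝ) :
    HasDerivAt (E d t (k+1))
      (Complex.I • (d * E d t (k+1) s) + Complex.I • (t * E d t k s)) s := by
  have hg : Continuous fun u : ℝ => expc d (-u) * (Complex.I • (t * E d t k u)) :=
    ((continuous_expc d).comp continuous_neg).mul
      ((continuous_const.mul (continuous_E d t k)).const_smul _)
  have hG : HasDerivAt (fun s : ℝ => ∫ u in (0:ℝ)..s, expc d (-u) * (Complex.I • (t * E d t k u)))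
      (expc d (-s) * (Complex.I • (t * E d t k s))) s :=
    intervalIntegral.integral_hasDerivAt_right (hg.intervalIntegrable 0 s)
      hg.aestronglyMeasurable.stronglyMeasurableAtFilter hg.continuousAt
  have key := (hasDerivAt_expc d s).mul hG
  have hval : Complex.I • (d * expc d s) *
        (∫ u in (0:ℝ)..s, expc d (-u) * (Complex.I • (t * E d t k u)))
      + expc d s * (expc d (-s) * (Complex.I • (t * E d t k s)))
    = Complex.I • (d * E d t (k+1) s) + Complex.I • (t * E d t k s) := by
    congr 1
    · rw [smul_mul_assoc, mul_assoc]; rfl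
    · rw [← mul_assoc, expc_mul_expc_neg, one_mul]
  exact hval ▸ key

lemma expc_mul_expc_neg' (b : B) (s : ℝ) : expc b s * expc (-b) s = 1 := by
  letI : NormedAlgebra ℚ B := .restrictScalars ℚ ℂ B
  rw [expc, expc, ← NormedSpace.exp_add_of_commute
    (((Commute.refl b).neg_right).smul_left _ |>.smul_right _)]
  rw [smul_neg, add_neg_cancel, NormedSpace.exp_zero]

lemma norm_E_le (d t : B) (K α : ℝ) (hK : 0 < K) (hα : 0 ≤ α)
    (hbound : ∀ s : ℝ, ‖expc d s‖ ≤ K * (1 + |s|) ^ α) (k : ℕ) (s : ℝ) :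
    ‖E d t k s‖ ≤ ((K+1)^2 * (1 + ‖t‖)) ^ (k+1) * (1 + |s|) ^ (α + k * (2*α+1)) := by
  have hKM : K ≤ (K+1)^2 * (1 + ‖t‖) := by nlinarith [norm_nonneg t]
  have hKKt : K * K * ‖t‖ ≤ (K+1)^2 * (1 + ‖t‖) := by nlinarith [norm_nonneg t, sq_nonneg K]
  have hM0 : (0:ℝ) < (K+1)^2 * (1 + ‖t‖) := by positivity
  revert s
  generalize hMdef : (K+1)^2 * (1 + ‖t‖) = M at hKM hKKt hM0 ⊢
  induction k with
  | zero =>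
      intro s
      have hb : (0:ℝ) < 1 + |s| := by positivity
      refine (hbound s).trans ?_
      have he : (α + ((0:ℕ):ℝ) * (2*α+1)) = α := by push_cast; ring
      rw [he, pow_one]
      gcongr
  | succ k ih =>
      intro s
      have hb : (0:ℝ) < 1 + |s| := by positivity
      have hFle : ∀ u ∈ Set.uIoc (0:ℝ) s,
          ‖expc d (-u) * (Complex.I • (t * E d t k u))‖
            ≤ K * (1+|s|)^α * (‖t‖ * (M^(k+1) * (1+|s|)^(α + k * (2*α+1)))) := by
        intro u hu
        have hus : |u| ≤ |s| := by
          rcases Set.mem_uIoc.mp hu with ⟨h1, h2⟩ | ⟨h1, h2⟩ <;> rw [abs_le] <;>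
            constructor <;> nlinarith [le_abs_self s, neg_abs_le s]
        have hbu : (1:ℝ) + |u| ≤ 1 + |s| := by linarith
        have h1 : ‖expc d (-u)‖ ≤ K * (1+|s|)^α := by
          refine (hbound (-u)).trans ?_
          rw [abs_neg]
          gcongr
        have h2 : ‖E d t k u‖ ≤ M^(k+1) * (1+|s|)^(α + k * (2*α+1)) := by
          refine (ih u).trans ?_
          have hβ0 : (0:ℝ) ≤ α + k * (2*α+1) := by positivity
          gcongr
        calc ‖expc d (-u) * (Complex.I • (t * E d t k u))‖
            ≤ ‖expc d (-u)‖ * ‖Complex.I • (t * E d t k u)‖ := norm_mul_le _ _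
          _ = ‖expc d (-u)‖ * ‖t * E d t k u‖ := by
              rw [norm_smul, Complex.norm_I, one_mul]
          _ ≤ ‖expc d (-u)‖ * (‖t‖ * ‖E d t k u‖) :=
              mul_le_mul_of_nonneg_left (norm_mul_le _ _) (norm_nonneg _)
          _ ≤ (K * (1+|s|)^α) * (‖t‖ * (M^(k+1) * (1+|s|)^(α + k * (2*α+1)))) := by
              refine mul_le_mul h1 ?_ (by positivity) (by positivity)
              exact mul_le_mul_of_nonneg_left h2 (norm_nonneg _)
      have hInt : ‖∫ u in (0:ℝ)..s, expc d (-u) * (Complex.I • (t * E d t k u))‖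
          ≤ K * (1+|s|)^α * (‖t‖ * (M^(k+1) * (1+|s|)^(α + k * (2*α+1)))) * |s| := by
        simpa using intervalIntegral.norm_integral_le_of_norm_le_const hFle
      calc ‖E d t (k+1) s‖
          ≤ ‖expc d s‖ * ‖∫ u in (0:ℝ)..s, expc d (-u) * (Complex.I • (t * E d t k u))‖ :=
            norm_mul_le _ _
        _ ≤ (K * (1+|s|)^α) *
              (K * (1+|s|)^α * (‖t‖ * (M^(k+1) * (1+|s|)^(α + k * (2*α+1)))) * |s|) :=
            mul_le_mul (hbound s) hInt (norm_nonneg _) (by positivity)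
        _ = (K * K * ‖t‖) * M^(k+1) *
              ((1+|s|)^α * (1+|s|)^α * (1+|s|)^(α + k * (2*α+1))) * |s| := by ring
        _ ≤ M * M^(k+1) *
              ((1+|s|)^α * (1+|s|)^α * (1+|s|)^(α + k * (2*α+1))) * (1+|s|) := by
            have h3 : |s| ≤ 1 + |s| := by linarith [abs_nonneg s]
            gcongr
        _ = M ^ (k+1+1) * (1 + |s|) ^ (α + ((k+1 : ℕ):ℝ) * (2*α+1)) := by
            push_cast
            have hsplit : (1+|s|) ^ (α + ((k:ℝ)+1) * (2*α+1))
                = (1+|s|)^α * (1+|s|)^α * ((1+|s|)^(α + (k:ℝ)*(2*α+1)) * (1+|s|)^(1:ℝ)) := by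
              rw [← Real.rpow_add hb, ← Real.rpow_add hb, ← Real.rpow_add hb]
              congr 1
              ring
            rw [hsplit, Real.rpow_one]
            ring

lemma prod_mul_E_eq_zero (I : TwoSidedIdeal B) (d t : B) (ht : t ∈ I)
    {p : ℕ} (hnil : ∀ r : Fin p → B, (∀ i, r i ∈ I) → (List.ofFn r).prod = 0) :
    ∀ (k : ℕ) (s : ℝ) (j : ℕ), p = j + k → ∀ r : Fin j → B, (∀ i, r i ∈ I) →
      (List.ofFn r).prod * E d t k s = 0 := by
  intro k
  induction k with
  | zero =>
      intro s j hj r hr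
      rw [Nat.add_zero] at hj
      subst hj
      rw [hnil r hr, zero_mul]
  | succ k ih =>
      intro s j hj r hr
      have hg : Continuous fun u : ℝ => expc d (-u) * (Complex.I • (t * E d t k u)) :=
        ((continuous_expc d).comp continuous_neg).mul
          ((continuous_const.mul (continuous_E d t k)).const_smul _)
      set c : B := (List.ofFn r).prod with hc
      have key : ∀ u : ℝ,
          (c * expc d s) * (expc d (-u) * (Complex.I • (t * E d t k u))) = 0 := by
        intro u
        set a : B := expc d s * expc d (-u) * t with ha
        have haI : a ∈ I := I.mul_mem_left _ t ht
        have hsnoc : (List.ofFn (Fin.snoc r a : Fin (j+1) → B)).prod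
            = (List.ofFn r).prod * a := by
          rw [List.ofFn_succ']
          simp
        have hmem : ∀ i, (Fin.snoc r a : Fin (j+1) → B) i ∈ I := by
          intro i
          refine Fin.lastCases ?_ ?_ i
          · simpa using haI
          · intro i; simpa using hr i
        have h0 : (List.ofFn (Fin.snoc r a : Fin (j+1) → B)).prod * E d t k u = 0 :=
          ih u (j+1) (by omega) _ hmem
        rw [hsnoc, ha] at h0
        calc (c * expc d s) * (expc d (-u) * (Complex.I • (t * E d t k u)))
            = Complex.I • ((c * (expc d s * expc d (-u) * t)) * E d t k u) := by
              simp only [mul_smul_comm, smul_mul_assoc, mul_assoc]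
          _ = 0 := by rw [h0, smul_zero]
      show c * (expc d s * ∫ u in (0:ℝ)..s, expc d (-u) * (Complex.I • (t * E d t k u))) = 0
      have h2 := (ContinuousLinearMap.mul ℝ B (c * expc d s)).intervalIntegral_comp_comm
        (hg.intervalIntegrable (μ := MeasureTheory.volume) 0 s)
      simp only [ContinuousLinearMap.mul_apply'] at h2
      rw [← mul_assoc, ← h2]
      simp only [key, intervalIntegral.integral_zero]

lemma hasDerivAt_sum_E (d t : B) (q : ℕ) (htE : ∀ s, t * E d t q s = 0) (s : ℝ) :
    HasDerivAt (fun s => ∑ k ∈ Finset.range (q+1), E d t k s)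
      (Complex.I • ((d + t) * ∑ k ∈ Finset.range (q+1), E d t k s)) s := by
  have hA : HasDerivAt (fun s => (∑ k ∈ Finset.range q, E d t (k+1) s) + E d t 0 s)
      ((∑ k ∈ Finset.range q,
          (Complex.I • (d * E d t (k+1) s) + Complex.I • (t * E d t k s)))
        + Complex.I • (d * E d t 0 s)) s :=
    (HasDerivAt.fun_sum fun k _ => hasDerivAt_E_succ d t k s).add (hasDerivAt_E_zero d t s)
  have hfun : (fun s : ℝ => ∑ k ∈ Finset.range (q+1), E d t k s)
      = fun s => (∑ k ∈ Finset.range q, E d t (k+1) s) + E d t 0 s := by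
    funext s
    exact Finset.sum_range_succ' _ q
  rw [hfun]
  have hval : (∑ k ∈ Finset.range q,
        (Complex.I • (d * E d t (k+1) s) + Complex.I • (t * E d t k s)))
      + Complex.I • (d * E d t 0 s)
      = Complex.I • ((d + t) * ∑ k ∈ Finset.range (q+1), E d t k s) := by
    rw [add_mul, smul_add, Finset.mul_sum, Finset.mul_sum,
      Finset.sum_range_succ' (fun k => d * E d t k s) q,
      Finset.sum_range_succ (fun k => t * E d t k s) q, htE s, add_zero,
      smul_add, Finset.smul_sum, Finset.smul_sum, Finset.sum_add_distrib]
    abel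
  exact hval ▸ hA

lemma expc_eq_sum_E (d t : B) (q : ℕ) (htE : ∀ s, t * E d t q s = 0) (s : ℝ) :
    expc (d + t) s = ∑ k ∈ Finset.range (q+1), E d t k s := by
  set b := d + t with hbdef
  set g : ℝ → B := fun s => ∑ k ∈ Finset.range (q+1), E d t k s with hgdef
  have hgd : ∀ s, HasDerivAt g (Complex.I • (b * g s)) s :=
    fun s => hasDerivAt_sum_E d t q htE s
  have hcomm : ∀ u : ℝ, Commute b (expc (-b) u) :=
    fun u => commute_expc b (-b) (Commute.refl b).neg_right u
  have hh : ∀ u : ℝ, HasDerivAt (fun s => expc (-b) s * g s) 0 u := by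
    intro u
    have h1 := (hasDerivAt_expc (-b) u).mul (hgd u)
    have e1 : Complex.I • (-b * expc (-b) u) * g u
        = -(Complex.I • ((b * expc (-b) u) * g u)) := by
      rw [neg_mul, smul_neg, neg_mul, smul_mul_assoc]
    have e2 : expc (-b) u * (Complex.I • (b * g u))
        = Complex.I • ((b * expc (-b) u) * g u) := by
      rw [mul_smul_comm, ← mul_assoc, ← (hcomm u).eq]
    have : Complex.I • (-b * expc (-b) u) * g u
        + expc (-b) u * (Complex.I • (b * g u)) = 0 := by
      rw [e1, e2, neg_add_cancel]
    exact this ▸ h1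
  have hconst : expc (-b) s * g s = expc (-b) 0 * g 0 :=
    is_const_of_deriv_eq_zero (fun x => (hh x).differentiableAt)
      (fun x => (hh x).deriv) s 0
  have hg0 : g 0 = 1 := by
    have hE0 : ∀ k, E d t k 0 = if k = 0 then 1 else 0 := by
      intro k
      cases k with
      | zero => simp [E, expc_zero]
      | succ k => simp [E, intervalIntegral.integral_same]
    show (∑ k ∈ Finset.range (q+1), E d t k 0) = 1
    simp only [hE0]
    simp
  have h1 : expc (-b) s * g s = 1 := by
    rw [hconst, expc_zero, one_mul, hg0]
  calc expc b s = expc b s * (expc (-b) s * g s) := by rw [h1, mul_one]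
    _ = (expc b s * expc (-b) s) * g s := by rw [mul_assoc]
    _ = g s := by rw [expc_mul_expc_neg', one_mul]

end PolyGrowthAux

/-- A perturbation of a polynomial growth element by an element of a nilpotent two-sided ideal
has polynomial growth; in particular it has real spectrum and its resolvent exists off ℝ. -/
theorem hasPolynomialGrowth_add_of_mem_nilpotent_ideal
    {B : Type*} [NormedRing B] [NormedAlgebra ℂ B] [CompleteSpace B]
    (I : TwoSidedIdeal B) (p : ℕ) (hp : 1 ≤ p)
    (hnil : ∀ r : Fin p → B, (∀ i, r i ∈ I) → (List.ofFn r).prod = 0)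
    (d t : B) (hd : HasPolynomialGrowth d) (ht : t ∈ I) :
    HasPolynomialGrowth (d + t) ∧
    (∀ lam ∈ spectrum ℂ (d + t), lam.im = 0) ∧
    ∀ lam : ℂ, lam.im ≠ 0 → IsUnit (d + t - algebraMap ℂ B lam) := by
  classical
  obtain ⟨K, α, hK, hα, hbound⟩ := hd
  obtain ⟨q, rfl⟩ : ∃ q, p = q + 1 := ⟨p - 1, by omega⟩
  have hbound' : ∀ s : ℝ, ‖PolyGrowthAux.expc d s‖ ≤ K * (1 + |s|) ^ α := hbound
  have htE : ∀ s : ℝ, t * PolyGrowthAux.E d t q s = 0 := by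
    intro s
    have h0 := PolyGrowthAux.prod_mul_E_eq_zero I d t ht hnil q s 1 (by omega)
      (fun _ => t) (fun _ => ht)
    simpa using h0
  have hid : ∀ s : ℝ, NormedSpace.exp ((Complex.I * (s:ℂ)) • (d + t))
      = ∑ k ∈ Finset.range (q+1), PolyGrowthAux.E d t k s :=
    fun s => PolyGrowthAux.expc_eq_sum_E d t q htE s
  have hM0 : (0:ℝ) < (K+1)^2 * (1 + ‖t‖) := by positivity
  have hgrow : HasPolynomialGrowth (d + t) := by
    refine ⟨∑ k ∈ Finset.range (q+1), ((K+1)^2 * (1 + ‖t‖))^(k+1), α + q * (2*α+1),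
      ?_, by positivity, ?_⟩
    · exact Finset.sum_pos (fun k _ => by positivity)
        (Finset.nonempty_range_iff.mpr (by omega))
    · intro s
      have hb1 : (1:ℝ) ≤ 1 + |s| := by linarith [abs_nonneg s]
      rw [hid s]
      refine (norm_sum_le _ _).trans ?_
      rw [Finset.sum_mul]
      refine Finset.sum_le_sum (fun k hk => ?_)
      refine (PolyGrowthAux.norm_E_le d t K α hK hα hbound' k s).trans ?_
      have hkq : (k:ℝ) ≤ q := by
        exact_mod_cast Nat.lt_succ_iff.mp (Finset.mem_range.mp hk)
      have hexp : α + (k:ℝ) * (2*α+1) ≤ α + (q:ℝ) * (2*α+1) := by nlinarith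
      exact mul_le_mul_of_nonneg_left
        (Real.rpow_le_rpow_of_exponent_le hb1 hexp) (by positivity)
  obtain ⟨K', α', hK', hα', hb'⟩ := hgrow
  have hspec : ∀ lam ∈ spectrum ℂ (d + t), lam.im = 0 := by
    intro lam hlam
    by_contra him
    have him' : |lam.im| > 0 := abs_pos.mpr him
    -- the key growth estimate
    have key : ∀ x : ℝ, 1 ≤ x →
        Real.exp x ≤ K' * ‖(1:B)‖ * (1 + x / |lam.im|) ^ α' := by
      intro x hx
      set s : ℝ := -(x / lam.im) with hs
      have hs0 : s ≠ 0 := by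
        rw [hs, neg_ne_zero]
        exact div_ne_zero (by linarith) him
      have hIs0 : (Complex.I * (s:ℂ)) ≠ 0 :=
        mul_ne_zero Complex.I_ne_zero (Complex.ofReal_ne_zero.mpr hs0)
      set r : ℂˣ := Units.mk0 (Complex.I * (s:ℂ)) hIs0 with hr
      have h1 : (Complex.I * (s:ℂ)) * lam ∈ spectrum ℂ ((Complex.I * (s:ℂ)) • (d + t)) := by
        have := (spectrum.smul_mem_smul_iff (a := d + t) (s := lam) (r := r)).mpr hlam
        simpa [hr, Units.smul_def, smul_eq_mul] using this
      have h2 := spectrum.exp_mem_exp ((Complex.I * (s:ℂ)) • (d + t)) h1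
      have h3 : ‖NormedSpace.exp ((Complex.I * (s:ℂ)) * lam)‖
          ≤ ‖NormedSpace.exp ((Complex.I * (s:ℂ)) • (d + t))‖ * ‖(1:B)‖ :=
        spectrum.norm_le_norm_mul_of_mem h2
      have h4 : ‖NormedSpace.exp ((Complex.I * (s:ℂ)) * lam)‖ = Real.exp x := by
        rw [← Complex.exp_eq_exp_ℂ, Complex.norm_exp]
        congr 1
        have : ((Complex.I * (s:ℂ)) * lam).re = -(s * lam.im) := by
          simp [Complex.mul_re, Complex.mul_im]
        rw [this, hs]
        field_simp
      have h5 : |s| = x / |lam.im| := by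
        rw [hs, abs_neg, abs_div, abs_of_nonneg (by linarith : (0:ℝ) ≤ x)]
      calc Real.exp x = ‖NormedSpace.exp ((Complex.I * (s:ℂ)) * lam)‖ := h4.symm
        _ ≤ ‖NormedSpace.exp ((Complex.I * (s:ℂ)) • (d + t))‖ * ‖(1:B)‖ := h3
        _ ≤ K' * (1 + |s|) ^ α' * ‖(1:B)‖ :=
            mul_le_mul_of_nonneg_right (hb' s) (norm_nonneg _)
        _ = K' * ‖(1:B)‖ * (1 + x / |lam.im|) ^ α' := by rw [h5]; ring
    obtain ⟨m, hm⟩ := exists_nat_ge α'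
    set C : ℝ := K' * ‖(1:B)‖ * (1 + 1/|lam.im|)^m with hCdef
    have key2 : ∀ x : ℝ, 1 ≤ x → Real.exp x ≤ C * x ^ m := by
      intro x hx
      have hx0 : (0:ℝ) < x := by linarith
      have hbase1 : (1:ℝ) ≤ 1 + x / |lam.im| := by
        have := div_nonneg hx0.le (abs_nonneg lam.im)
        linarith
      refine (key x hx).trans ?_
      have s1 : (1 + x / |lam.im|) ^ α' ≤ (1 + x / |lam.im|) ^ (m:ℝ) :=
        Real.rpow_le_rpow_of_exponent_le hbase1 hm
      have s2 : (1 + x / |lam.im|) ^ (m:ℝ) = (1 + x / |lam.im|) ^ m :=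
        Real.rpow_natCast _ m
      have s3 : (1:ℝ) + x / |lam.im| ≤ (1 + 1/|lam.im|) * x := by
        have e : (1 + 1/|lam.im|) * x = x + x / |lam.im| := by ring
        rw [e]
        linarith
      calc K' * ‖(1:B)‖ * (1 + x / |lam.im|) ^ α'
          ≤ K' * ‖(1:B)‖ * ((1 + 1/|lam.im|)^m * x^m) := by
            refine mul_le_mul_of_nonneg_left ?_ (by positivity)
            calc (1 + x / |lam.im|) ^ α' ≤ (1 + x / |lam.im|) ^ (m:ℝ) := s1
              _ = (1 + x / |lam.im|) ^ m := s2
              _ ≤ ((1 + 1/|lam.im|) * x) ^ m := by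
                  refine pow_le_pow_left₀ (by positivity) s3 m
              _ = (1 + 1/|lam.im|)^m * x^m := mul_pow _ _ m
        _ = C * x ^ m := by rw [hCdef]; ring
    have hlim := (Real.tendsto_pow_mul_exp_neg_atTop_nhds_zero m).const_mul C
    have hev : ∀ᶠ x in Filter.atTop, (1:ℝ) ≤ C * (x ^ m * Real.exp (-x)) := by
      filter_upwards [Filter.eventually_ge_atTop (1:ℝ)] with x hx
      have h6 := key2 x hx
      have h7 : Real.exp x * Real.exp (-x) = 1 := by
        rw [← Real.exp_add]
        simp
      calc (1:ℝ) = Real.exp x * Real.exp (-x) := h7.symm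
        _ ≤ (C * x ^ m) * Real.exp (-x) :=
            mul_le_mul_of_nonneg_right h6 (Real.exp_pos _).le
        _ = C * (x ^ m * Real.exp (-x)) := by ring
    have hfin : (1:ℝ) ≤ C * 0 := ge_of_tendsto hlim hev
    norm_num at hfin
  refine ⟨⟨K', α', hK', hα', hb'⟩, hspec, ?_⟩
  intro lam him
  have h1 : lam ∉ spectrum ℂ (d + t) := fun h => him (hspec lam h)
  have h2 : IsUnit (algebraMap ℂ B lam - (d + t)) := spectrum.notMem_iff.mp h1
  simpa [neg_sub] using h2.neg
end
end

section
/- Let m ≥ 1, n ∈ ℕ, let f : ℝᵐ → ℝ be n times continuously differentiable (ContDiff of order n), and let K ⊆ ℝᵐ be a compact set. Then there exists C > 0 such that for every s ∈ ℝ, every x ∈ K, and every natural number j ≤ n, the j-th iterated Fréchet derivative of the function x ↦ exp(i·s·f(x)) (with values in ℂ) satisfies ‖D^j (exp(i s f))(x)‖ ≤ C·(1+|s|)ⁿ. -/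
noncomputable section

lemma aux_iteratedDeriv_cexp_real (c : ℂ) :
    ∀ k : ℕ, iteratedDeriv k (fun t : ℝ => Complex.exp (c * t))
      = fun t : ℝ => c ^ k * Complex.exp (c * t) := by
  intro k
  induction k with
  | zero => simp
  | succ k ih =>
    rw [iteratedDeriv_succ, ih]
    funext t
    have h : HasDerivAt (fun t : ℝ => Complex.exp (c * t))
        (Complex.exp (c * t) * c) t := by
      have h1 : HasDerivAt (fun t : ℝ => c * (t : ℂ)) c t := by
        simpa using (Complex.ofRealCLM.hasDerivAt (x := t)).const_mul c
      simpa using h1.cexp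
    have := (h.const_mul (c ^ k)).deriv
    rw [this]
    ring

/-- Derivative estimate showing that `Cⁿ(K)` is a Banach algebra of polynomial growth:
for real-valued `f` of class `Cⁿ`, the iterated derivatives of `x ↦ exp(i s f(x))` on a
compact set grow at most polynomially in `s`. -/
theorem iteratedFDeriv_exp_smul_real_poly_bound
    (m n : ℕ) (hm : 1 ≤ m)
    (f : EuclideanSpace ℝ (Fin m) → ℝ) (hf : ContDiff ℝ n f)
    (K : Set (EuclideanSpace ℝ (Fin m))) (hK : IsCompact K) :
    ∃ C : ℝ, 0 < C ∧ ∀ s : ℝ, ∀ x ∈ K, ∀ j : ℕ, j ≤ n →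
      ‖iteratedFDeriv ℝ j
          (fun y : EuclideanSpace ℝ (Fin m) => Complex.exp (Complex.I * (s : ℂ) * (f y : ℂ))) x‖
        ≤ C * (1 + |s|) ^ n := by
  -- bound the derivatives of f on K
  have hcont : ContinuousOn
      (fun x => ∑ i ∈ Finset.range (n + 1), ‖iteratedFDeriv ℝ i f x‖) K := by
    apply continuousOn_finset_sum
    intro i hi
    have hi' : (i : WithTop ℕ∞) ≤ (n : ℕ) := by
      exact_mod_cast Nat.lt_succ_iff.mp (Finset.mem_range.mp hi)
    exact ((hf.continuous_iteratedFDeriv hi').norm).continuousOn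
  obtain ⟨D0, hD0⟩ := hK.exists_bound_of_continuousOn hcont
  set D : ℝ := max D0 1 with hD
  have hD1 : (1 : ℝ) ≤ D := le_max_right _ _
  have hfD : ∀ x ∈ K, ∀ i, 1 ≤ i → i ≤ n → ‖iteratedFDeriv ℝ i f x‖ ≤ D ^ i := by
    intro x hx i h1 h2
    have hterm : ‖iteratedFDeriv ℝ i f x‖
        ≤ ∑ k ∈ Finset.range (n + 1), ‖iteratedFDeriv ℝ k f x‖ :=
      Finset.single_le_sum (f := fun k => ‖iteratedFDeriv ℝ k f x‖) (fun k _ => norm_nonneg _)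
        (Finset.mem_range.mpr (Nat.lt_succ_of_le h2))
    have := hD0 x hx
    have hsum : ∑ k ∈ Finset.range (n + 1), ‖iteratedFDeriv ℝ k f x‖ ≤ D0 :=
      (le_abs_self _).trans (by simpa [Real.norm_eq_abs] using this)
    calc ‖iteratedFDeriv ℝ i f x‖ ≤ D0 := hterm.trans hsum
      _ ≤ D := le_max_left _ _
      _ ≤ D ^ i := le_self_pow₀ (by linarith) (by omega)
  refine ⟨(n.factorial : ℝ) * D ^ n, by positivity, ?_⟩
  intro s x hx j hj
  set c : ℂ := Complex.I * (s : ℂ) with hc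
  set g : ℝ → ℂ := fun t => Complex.exp (c * t) with hg
  have hgC : ContDiff ℝ (n : ℕ∞) g := by
    exact ((contDiff_const.mul Complex.ofRealCLM.contDiff).cexp : ContDiff ℝ ⊤ g).of_le le_top
  have hfd : ContDiff ℝ (n : ℕ∞) f := hf
  have hcomp : (fun y : EuclideanSpace ℝ (Fin m) =>
      Complex.exp (Complex.I * (s : ℂ) * (f y : ℂ))) = g ∘ f := by
    funext y; simp [hg, hc, mul_assoc]
  rw [hcomp]
  have hnormc : ‖c‖ = |s| := by
    simp [hc]
  have hgder : ∀ i, i ≤ j → ‖iteratedFDeriv ℝ i g (f x)‖ ≤ (1 + |s|) ^ n := by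
    intro i hi
    rw [norm_iteratedFDeriv_eq_norm_iteratedDeriv, aux_iteratedDeriv_cexp_real c i]
    have hexp : ‖Complex.exp (c * (f x : ℂ))‖ = 1 := by
      rw [Complex.norm_exp]
      simp [hc, Complex.mul_re]
    rw [norm_mul, norm_pow, hexp, mul_one, hnormc]
    calc |s| ^ i ≤ (1 + |s|) ^ i :=
          pow_le_pow_left₀ (abs_nonneg s) (by linarith [abs_nonneg s]) i
      _ ≤ (1 + |s|) ^ n :=
          pow_le_pow_right₀ (by linarith [abs_nonneg s]) (hi.trans hj)
  have key := norm_iteratedFDeriv_comp_le hgC hfd (by exact_mod_cast hj) x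
    hgder (fun i h1 h2 => hfD x hx i h1 (h2.trans hj))
  calc ‖iteratedFDeriv ℝ j (g ∘ f) x‖ ≤ (j.factorial : ℝ) * (1 + |s|) ^ n * D ^ j := key
    _ ≤ (n.factorial : ℝ) * (1 + |s|) ^ n * D ^ n := by
        gcongr <;> first
          | exact_mod_cast Nat.factorial_le hj
          | exact hD1
          | positivity
    _ = (n.factorial : ℝ) * D ^ n * (1 + |s|) ^ n := by ring
end
end

section
/- Let B be a complex unital Banach algebra, let m ≥ 1, and let b₁, …, b_m ∈ B each have polynomial growth. Then for every Schwartz function g : ℝᵐ → ℂ, the B-valued function s = (s₁,…,s_m) ↦ g(s) • (exp(i s₁ b₁) · exp(i s₂ b₂) · … · exp(i s_m b_m)) (with the factors multiplied in increasing order of the index) is Bochner integrable on ℝᵐ with respect to Lebesgue measure. -/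
noncomputable section

open MeasureTheory

lemma abs_coord_le_norm {m : ℕ} (s : EuclideanSpace ℝ (Fin m)) (j : Fin m) :
    |s j| ≤ ‖s‖ := by
  rw [EuclideanSpace.norm_eq]
  calc |s j| = Real.sqrt (‖s j‖ ^ 2) := by
        rw [Real.sqrt_sq_eq_abs, Real.norm_eq_abs, abs_abs]
    _ ≤ _ := by
        apply Real.sqrt_le_sqrt
        exact Finset.single_le_sum (fun i _ => sq_nonneg ‖s i‖) (Finset.mem_univ j)

lemma one_add_pow_le {N : ℕ} {x : ℝ} (hx : 0 ≤ x) :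
    (1 + x) ^ N ≤ 2 ^ N * (1 + x ^ N) := by
  rcases le_total x 1 with h | h
  · calc (1 + x) ^ N ≤ 2 ^ N := by
          apply pow_le_pow_left₀ (by linarith) (by linarith)
      _ ≤ 2 ^ N * (1 + x ^ N) := by
          nlinarith [pow_nonneg hx N, pow_pos (by norm_num : (0:ℝ) < 2) N]
  · calc (1 + x) ^ N ≤ (2 * x) ^ N := by
          apply pow_le_pow_left₀ (by linarith) (by linarith)
      _ = 2 ^ N * x ^ N := mul_pow 2 x N
      _ ≤ 2 ^ N * (1 + x ^ N) := by
          have : (0:ℝ) < 2 ^ N := pow_pos (by norm_num) N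
          nlinarith

/-- Well-definedness of the ordered C^∞ functional calculus integral: for polynomial growth
elements `b₁, …, b_m` and a Schwartz function `g`, the function
`s ↦ g(s) • exp(i s₁ b₁) ⋯ exp(i s_m b_m)` is Bochner integrable. -/
theorem integrable_schwartz_smul_ordered_exp_prod
    {B : Type*} [NormedRing B] [NormedAlgebra ℂ B] [CompleteSpace B]
    (m : ℕ) (hm : 1 ≤ m) (b : Fin m → B) (hb : ∀ j, HasPolynomialGrowth (b j))
    (g : SchwartzMap (EuclideanSpace ℝ (Fin m)) ℂ) :
    Integrable (fun s : EuclideanSpace ℝ (Fin m) =>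
      g s • (List.ofFn fun j : Fin m =>
        NormedSpace.exp ((Complex.I * (s j : ℂ)) • b j)).prod) := by
  choose K α hK hα hbd using hb
  set N : ℕ := ∑ j, ⌈α j⌉₊ with hNdef
  set C : ℝ := 2 ^ N * ∏ j, K j with hCdef
  have hKprod : 0 ≤ ∏ j, K j := Finset.prod_nonneg fun j _ => (hK j).le
  have hC : 0 ≤ C := mul_nonneg (pow_nonneg (by norm_num) N) hKprod
  -- continuity of the integrand
  have hcont : Continuous (fun s : EuclideanSpace ℝ (Fin m) =>
      g s • (List.ofFn fun j : Fin m =>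
        NormedSpace.exp ((Complex.I * (s j : ℂ)) • b j)).prod) := by
    apply g.continuous.smul
    have : ∀ j : Fin m, Continuous (fun s : EuclideanSpace ℝ (Fin m) =>
        NormedSpace.exp ((Complex.I * (s j : ℂ)) • b j)) := by
      intro j
      letI : NormedAlgebra ℚ B := NormedAlgebra.restrictScalars ℚ ℂ B
      apply NormedSpace.exp_continuous.comp
      exact ((continuous_const.mul (Complex.continuous_ofReal.comp
        (EuclideanSpace.proj j).continuous)).smul continuous_const)
    simpa only [List.ofFn_eq_map] using continuous_list_prod (List.finRange m)
      (fun j _ => this j)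
  -- dominating function
  refine Integrable.mono'
    (((g.integrable (μ := volume)).norm.add (g.integrable_pow_mul volume N)).const_mul C)
    hcont.aestronglyMeasurable (Filter.Eventually.of_forall fun s => ?_)
  have hs : 0 ≤ ‖s‖ := norm_nonneg s
  have key : ‖(List.ofFn fun j : Fin m =>
      NormedSpace.exp ((Complex.I * (s j : ℂ)) • b j)).prod‖ ≤
      (∏ j, K j) * (1 + ‖s‖) ^ N := by
    have hne : (List.ofFn fun j : Fin m =>
        NormedSpace.exp ((Complex.I * (s j : ℂ)) • b j)) ≠ [] := by
      simp only [ne_eq, List.ofFn_eq_nil_iff]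
      omega
    calc ‖(List.ofFn fun j : Fin m =>
          NormedSpace.exp ((Complex.I * (s j : ℂ)) • b j)).prod‖
        ≤ ((List.ofFn fun j : Fin m =>
          NormedSpace.exp ((Complex.I * (s j : ℂ)) • b j)).map norm).prod :=
          List.norm_prod_le' hne
      _ = ∏ j, ‖NormedSpace.exp ((Complex.I * (s j : ℂ)) • b j)‖ := by
          rw [List.map_ofFn, List.prod_ofFn]; rfl
      _ ≤ ∏ j, K j * (1 + ‖s‖) ^ (⌈α j⌉₊ : ℕ) := by
          apply Finset.prod_le_prod (fun j _ => norm_nonneg _)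
          intro j _
          calc ‖NormedSpace.exp ((Complex.I * (s j : ℂ)) • b j)‖
              ≤ K j * (1 + |s j|) ^ (α j) := hbd j (s j)
            _ ≤ K j * (1 + ‖s‖) ^ (α j) := by
                apply mul_le_mul_of_nonneg_left _ (hK j).le
                exact Real.rpow_le_rpow (by positivity)
                  (by linarith [abs_coord_le_norm s j]) (hα j)
            _ ≤ K j * (1 + ‖s‖) ^ ((⌈α j⌉₊ : ℕ) : ℝ) := by
                apply mul_le_mul_of_nonneg_left _ (hK j).le
                exact Real.rpow_le_rpow_of_exponent_le (by linarith)
                  (Nat.le_ceil (α j))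
            _ = K j * (1 + ‖s‖) ^ (⌈α j⌉₊ : ℕ) := by
                rw [Real.rpow_natCast]
      _ = (∏ j, K j) * (1 + ‖s‖) ^ N := by
          rw [Finset.prod_mul_distrib, Finset.prod_pow_eq_pow_sum]
  calc ‖g s • (List.ofFn fun j : Fin m =>
        NormedSpace.exp ((Complex.I * (s j : ℂ)) • b j)).prod‖
      = ‖g s‖ * ‖(List.ofFn fun j : Fin m =>
        NormedSpace.exp ((Complex.I * (s j : ℂ)) • b j)).prod‖ := norm_smul _ _
    _ ≤ ‖g s‖ * ((∏ j, K j) * (1 + ‖s‖) ^ N) :=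
        mul_le_mul_of_nonneg_left key (norm_nonneg _)
    _ ≤ ‖g s‖ * ((∏ j, K j) * (2 ^ N * (1 + ‖s‖ ^ N))) := by
        apply mul_le_mul_of_nonneg_left _ (norm_nonneg _)
        exact mul_le_mul_of_nonneg_left (one_add_pow_le hs) hKprod
    _ = C * (‖g s‖ + ‖s‖ ^ N * ‖g s‖) := by ring
end
end

section
/- Let B be a complex unital Banach algebra, let m ≥ 1, and let b₁, …, b_m ∈ B be pairwise commuting elements, each of polynomial growth. For a Schwartz function f : ℝᵐ → ℂ define T(f) = ∫_{ℝᵐ} (𝓕f)(ξ) • exp( 2π i (ξ₁ b₁ + … + ξ_m b_m) ) dξ, where 𝓕f(ξ) = ∫ f(x) e^{−2πi⟨x,ξ⟩} dx is the Fourier transform; this Bochner integral converges for every Schwartz f. Then T is multiplicative on Schwartz functions: if f, g, h are Schwartz functions with h(x) = f(x)·g(x) for all x ∈ ℝᵐ, then T(h) = T(f)·T(g). -/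
noncomputable section

open MeasureTheory

/-- The C^∞ functional calculus of a commuting tuple, on a Schwartz function `f`:
`T f = ∫ (𝓕 f)(ξ) • exp(2πi (ξ₁ b₁ + ⋯ + ξ_m b_m)) dξ` (2π-convention Fourier transform). -/
def smoothCalc {B : Type*} [NormedRing B] [NormedAlgebra ℂ B] [CompleteSpace B]
    (m : ℕ) (b : Fin m → B) (f : SchwartzMap (EuclideanSpace ℝ (Fin m)) ℂ) : B :=
  ∫ ξ : EuclideanSpace ℝ (Fin m),
    (FourierTransform.fourier (⇑f) ξ) •
      NormedSpace.exp ((2 * (Real.pi : ℂ) * Complex.I) • ∑ j, (ξ j : ℂ) • b j)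

open Complex
open scoped FourierTransform RealInnerProductSpace

namespace SCAux

variable {B : Type*} [NormedRing B] [NormedAlgebra ℂ B] [CompleteSpace B] {m : ℕ}

abbrev V (m : ℕ) := EuclideanSpace ℝ (Fin m)

def expE (b : Fin m → B) (ξ : V m) : B :=
  NormedSpace.exp ((2 * (Real.pi : ℂ) * Complex.I) • ∑ j, (ξ j : ℂ) • b j)

lemma expE_continuous (b : Fin m → B) : Continuous (expE b) := by
  let +nondep : NormedAlgebra ℚ B := .restrictScalars ℚ ℂ B
  apply NormedSpace.exp_continuous.comp
  exact continuous_const.smul (continuous_finset_sum _ fun j _ =>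
    (Complex.continuous_ofReal.comp (EuclideanSpace.proj (𝕜 := ℝ) j).continuous).smul
      continuous_const)

set_option linter.unusedSectionVars false

lemma norm_noncommProd_le {ι : Type*} (s : Finset ι) (f : ι → B)
    (comm : (s : Set ι).Pairwise (Function.onFun Commute f)) :
    ‖s.noncommProd f comm‖ ≤ ‖(1 : B)‖ * ∏ i ∈ s, ‖f i‖ := by
  induction s using Finset.cons_induction with
  | empty => simp
  | cons a s ha ih =>
      rw [Finset.noncommProd_cons, Finset.prod_cons]
      calc ‖f a * s.noncommProd f (comm.mono (by intro x hx; simp [hx]))‖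
          ≤ ‖f a‖ * ‖s.noncommProd f _‖ := norm_mul_le _ _
        _ ≤ ‖f a‖ * (‖(1:B)‖ * ∏ i ∈ s, ‖f i‖) := by
            exact mul_le_mul_of_nonneg_left (ih _) (norm_nonneg _)
        _ = ‖(1:B)‖ * (‖f a‖ * ∏ i ∈ s, ‖f i‖) := by ring

lemma coord_le_norm (ξ : V m) (j : Fin m) : |ξ j| ≤ ‖ξ‖ := by
  rw [EuclideanSpace.norm_eq]
  simp only [Real.norm_eq_abs]
  calc |ξ j| = Real.sqrt (|ξ j| ^ 2) := (Real.sqrt_sq (abs_nonneg _)).symm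
    _ ≤ _ := Real.sqrt_le_sqrt
        (Finset.single_le_sum (f := fun i => |ξ i| ^ 2)
          (fun i _ => sq_nonneg _) (Finset.mem_univ j))

lemma expE_bound (b : Fin m → B) (hb : ∀ j, HasPolynomialGrowth (b j))
    (hcomm : ∀ i j, Commute (b i) (b j)) :
    ∃ (C : ℝ) (N : ℕ), 0 ≤ C ∧ ∀ ξ : V m, ‖expE b ξ‖ ≤ C * (1 + ‖ξ‖) ^ N := by
  let +nondep : NormedAlgebra ℚ B := .restrictScalars ℚ ℂ B
  choose K α hK hα hKα using hb
  refine ⟨‖(1 : B)‖ * ∏ j, (K j * 8 ^ (α j)), ⌈∑ j, α j⌉₊,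
    mul_nonneg (norm_nonneg _) (Finset.prod_nonneg fun j _ =>
      mul_nonneg (hK j).le (Real.rpow_nonneg (by norm_num) _)), fun ξ => ?_⟩
  have hcm : ∀ i ∈ Finset.univ, ∀ j ∈ Finset.univ,
      Commute ((2 * (Real.pi : ℂ) * Complex.I) • (ξ i : ℂ) • b i)
        ((2 * (Real.pi : ℂ) * Complex.I) • (ξ j : ℂ) • b j) :=
    fun i _ j _ => ((((hcomm i j).smul_right _).smul_right _).smul_left _).smul_left _
  have hx : (0:ℝ) ≤ ‖ξ‖ := norm_nonneg _
  have h1x : (1:ℝ) ≤ 1 + ‖ξ‖ := by linarith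
  have key : expE b ξ =
      Finset.univ.noncommProd
        (fun j => NormedSpace.exp ((2 * (Real.pi : ℂ) * Complex.I) • (ξ j : ℂ) • b j))
        (fun i hi j hj _ => (hcm i hi j hj).exp) := by
    rw [expE, Finset.smul_sum, NormedSpace.exp_sum_of_commute]
    exact fun i hi j hj _ => hcm i hi j hj
  -- bound each factor
  have hterm : ∀ j, ‖NormedSpace.exp ((2 * (Real.pi : ℂ) * Complex.I) • (ξ j : ℂ) • b j)‖
      ≤ (K j * 8 ^ (α j)) * (1 + ‖ξ‖) ^ (α j) := by
    intro j
    have hrw : (2 * (Real.pi : ℂ) * Complex.I) • (ξ j : ℂ) • b j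
        = (Complex.I * ((2 * Real.pi * ξ j : ℝ) : ℂ)) • b j := by
      rw [smul_smul]; congr 1; push_cast; ring
    rw [hrw]
    calc ‖NormedSpace.exp ((Complex.I * ((2 * Real.pi * ξ j : ℝ) : ℂ)) • b j)‖
        ≤ K j * (1 + |2 * Real.pi * ξ j|) ^ (α j) := hKα j _
      _ ≤ K j * (8 * (1 + ‖ξ‖)) ^ (α j) := by
          apply mul_le_mul_of_nonneg_left _ (hK j).le
          apply Real.rpow_le_rpow (by positivity) _ (hα j)
          have h1 : |2 * Real.pi * ξ j| = 2 * Real.pi * |ξ j| := by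
            rw [abs_mul, abs_of_pos (by positivity)]
          have h2 : |ξ j| ≤ ‖ξ‖ := coord_le_norm ξ j
          have h3 : 2 * Real.pi ≤ 8 := by nlinarith [Real.pi_le_four]
          have h4 : (0:ℝ) ≤ 2 * Real.pi := by positivity
          nlinarith [abs_nonneg (ξ j)]
      _ = (K j * 8 ^ (α j)) * (1 + ‖ξ‖) ^ (α j) := by
          rw [Real.mul_rpow (by norm_num) (by positivity)]; ring
  calc ‖expE b ξ‖ ≤ ‖(1:B)‖ * ∏ j, ‖NormedSpace.exp
        ((2 * (Real.pi : ℂ) * Complex.I) • (ξ j : ℂ) • b j)‖ := by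
        rw [key]; exact norm_noncommProd_le _ _ _
    _ ≤ ‖(1:B)‖ * ∏ j, ((K j * 8 ^ (α j)) * (1 + ‖ξ‖) ^ (α j)) := by
        apply mul_le_mul_of_nonneg_left _ (norm_nonneg _)
        exact Finset.prod_le_prod (fun j _ => norm_nonneg _) (fun j _ => hterm j)
    _ = (‖(1:B)‖ * ∏ j, (K j * 8 ^ (α j))) * (1 + ‖ξ‖) ^ (∑ j, α j) := by
        rw [Finset.prod_mul_distrib, ← Real.rpow_sum_of_pos (by linarith)]; ring
    _ ≤ (‖(1:B)‖ * ∏ j, (K j * 8 ^ (α j))) * (1 + ‖ξ‖) ^ (⌈∑ j, α j⌉₊) := by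
        apply mul_le_mul_of_nonneg_left _ (mul_nonneg (norm_nonneg _)
          (Finset.prod_nonneg fun j _ =>
            mul_nonneg (hK j).le (Real.rpow_nonneg (by norm_num) _)))
        rw [← Real.rpow_natCast _ (⌈∑ j, α j⌉₊)]
        exact Real.rpow_le_rpow_of_exponent_le h1x (Nat.le_ceil _)

end SCAux

namespace SCAux
open SchwartzMap

variable {B : Type*} [NormedRing B] [NormedAlgebra ℂ B] [CompleteSpace B] {m : ℕ}

lemma poly_mul_schwartz_integrable (φ : SchwartzMap (V m) ℂ) (N : ℕ) :
    Integrable (fun ξ : V m => (1 + ‖ξ‖) ^ N * ‖φ ξ‖) := by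
  have h1 : Integrable (fun ξ : V m =>
      (2:ℝ)^N * ‖φ ξ‖ + (2:ℝ)^N * (‖ξ‖^N * ‖φ ξ‖)) :=
    ((φ.integrable (μ := volume)).norm.const_mul _).add
      ((φ.integrable_pow_mul volume N).const_mul _)
  refine h1.mono' (Continuous.aestronglyMeasurable (by fun_prop)) ?_
  filter_upwards with ξ
  have h0 : (0:ℝ) ≤ ‖ξ‖ := norm_nonneg _
  rw [Real.norm_of_nonneg (by positivity)]
  have hmax : (1 + ‖ξ‖) ^ N ≤ 2^N * (1 + ‖ξ‖^N) := by
    calc (1 + ‖ξ‖)^N ≤ (2 * max 1 ‖ξ‖)^N := by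
          apply pow_le_pow_left₀ (by positivity)
          rcases le_total ‖ξ‖ 1 with hc | hc
          · rw [max_eq_left hc]; linarith
          · rw [max_eq_right hc]; linarith
      _ = 2^N * (max 1 ‖ξ‖)^N := mul_pow _ _ _
      _ ≤ 2^N * (1 + ‖ξ‖^N) := by
          apply mul_le_mul_of_nonneg_left _ (by positivity)
          rcases le_total ‖ξ‖ 1 with hc | hc
          · rw [max_eq_left hc, one_pow]
            have := pow_nonneg h0 N; linarith
          · rw [max_eq_right hc]
            have : (1:ℝ) ≤ ‖ξ‖^N := one_le_pow₀ hc
            linarith [pow_nonneg h0 N]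
  have hφ : (0:ℝ) ≤ ‖φ ξ‖ := norm_nonneg _
  nlinarith [mul_le_mul_of_nonneg_right hmax hφ]

lemma expE_add (b : Fin m → B) (hcomm : ∀ i j, Commute (b i) (b j)) (ξ η : V m) :
    expE b (ξ + η) = expE b ξ * expE b η := by
  let +nondep : NormedAlgebra ℚ B := .restrictScalars ℚ ℂ B
  have hc : Commute ((2 * (Real.pi : ℂ) * Complex.I) • ∑ j, (ξ j : ℂ) • b j)
      ((2 * (Real.pi : ℂ) * Complex.I) • ∑ j, (η j : ℂ) • b j) := by
    apply Commute.smul_left; apply Commute.smul_right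
    apply Commute.sum_left; intro i _
    apply Commute.sum_right; intro j _
    exact ((hcomm i j).smul_right _).smul_left _
  rw [expE, expE, expE, ← NormedSpace.exp_add_of_commute hc, ← smul_add,
    ← Finset.sum_add_distrib]
  congr 1
  congr 1
  refine Finset.sum_congr rfl fun j _ => ?_
  have : ((ξ + η) j : ℂ) = (ξ j : ℂ) + (η j : ℂ) := by
    rw [PiLp.add_apply]; push_cast; ring
  rw [this, add_smul]

lemma integrand_integrable (b : Fin m → B) (hb : ∀ j, HasPolynomialGrowth (b j))
    (hcomm : ∀ i j, Commute (b i) (b j)) (f : SchwartzMap (V m) ℂ) :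
    Integrable (fun ξ : V m => (𝓕 (⇑f) ξ) • expE b ξ) := by
  obtain ⟨C, N, hC, hE⟩ := expE_bound b hb hcomm
  set φ : SchwartzMap (V m) ℂ := SchwartzMap.fourierTransformCLM ℂ f with hφdef
  have hcoe : 𝓕 (⇑f) = ⇑φ := rfl
  rw [hcoe]
  refine ((poly_mul_schwartz_integrable φ N).const_mul C).mono'
    (Continuous.aestronglyMeasurable (φ.continuous.smul (expE_continuous b))) ?_
  filter_upwards with ξ
  rw [norm_smul]
  calc ‖φ ξ‖ * ‖expE b ξ‖ ≤ ‖φ ξ‖ * (C * (1 + ‖ξ‖)^N) :=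
        mul_le_mul_of_nonneg_left (hE ξ) (norm_nonneg _)
    _ = C * ((1 + ‖ξ‖)^N * ‖φ ξ‖) := by ring

end SCAux

namespace SCAux
open SchwartzMap Real

variable {B : Type*} [NormedRing B] [NormedAlgebra ℂ B] [CompleteSpace B] {m : ℕ}

lemma norm_cexp_I (r : ℝ) : ‖Complex.exp ((r : ℂ) * Complex.I)‖ = 1 := by
  rw [Complex.norm_exp_ofReal_mul_I]

lemma fourier_conv (f g h : SchwartzMap (V m) ℂ) (hfg : ∀ x, h x = f x * g x) (ξ : V m) :
    𝓕 (⇑h) ξ = ∫ η : V m, 𝓕 (⇑f) η * 𝓕 (⇑g) (ξ - η) := by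
  have hFf_int : Integrable (𝓕 ⇑f) volume :=
    (SchwartzMap.fourierTransformCLM ℂ f).integrable
  have hFf_cont : Continuous (𝓕 ⇑f) := (SchwartzMap.fourierTransformCLM ℂ f).continuous
  have hFg_cont : Continuous (𝓕 ⇑g) := (SchwartzMap.fourierTransformCLM ℂ g).continuous
  have hinv : ∀ x : V m, f x = ∫ η : V m,
      Complex.exp ((↑(2 * Real.pi * ⟪η, x⟫) : ℂ) * Complex.I) * 𝓕 (⇑f) η := by
    intro x
    have h1 : 𝓕⁻ (𝓕 ⇑f) x = f x :=
      congrFun (f.continuous.fourierInv_fourier_eq f.integrable hFf_int) x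
    rw [← h1, Real.fourierInv_eq']
    simp_rw [smul_eq_mul]
  have hswap : Integrable (Function.uncurry fun (x : V m) (η : V m) =>
      Complex.exp ((↑(-2 * Real.pi * ⟪x, ξ⟫) : ℂ) * Complex.I) *
        ((Complex.exp ((↑(2 * Real.pi * ⟪η, x⟫) : ℂ) * Complex.I) * 𝓕 (⇑f) η) * g x))
      (volume.prod volume) := by
    have hdom : Integrable (fun p : V m × V m => ‖g p.1‖ * ‖𝓕 (⇑f) p.2‖)
        (volume.prod volume) := (g.integrable (μ := volume)).norm.mul_prod hFf_int.norm
    refine hdom.mono' (Continuous.aestronglyMeasurable ?_) ?_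
    · apply Continuous.mul
      · apply Complex.continuous_exp.comp
        apply Continuous.mul _ continuous_const
        exact Complex.continuous_ofReal.comp
          (continuous_const.mul ((continuous_fst.inner continuous_const)))
      · apply Continuous.mul
        · apply Continuous.mul
          · apply Complex.continuous_exp.comp
            apply Continuous.mul _ continuous_const
            exact Complex.continuous_ofReal.comp
              (continuous_const.mul (continuous_snd.inner continuous_fst))
          · exact hFf_cont.comp continuous_snd
        · exact g.continuous.comp continuous_fst
    · filter_upwards with p
      rw [Function.uncurry]
      simp only [norm_mul, norm_cexp_I, one_mul]
      calc ‖𝓕 (⇑f) p.2‖ * ‖g p.1‖ = ‖g p.1‖ * ‖𝓕 (⇑f) p.2‖ := by ring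
        _ ≤ _ := le_refl _
  calc 𝓕 (⇑h) ξ
      = ∫ x : V m, Complex.exp ((↑(-2 * Real.pi * ⟪x, ξ⟫) : ℂ) * Complex.I) * (f x * g x) := by
        rw [Real.fourier_eq']
        simp_rw [smul_eq_mul, hfg]
    _ = ∫ x : V m, ∫ η : V m,
        Complex.exp ((↑(-2 * Real.pi * ⟪x, ξ⟫) : ℂ) * Complex.I) *
          ((Complex.exp ((↑(2 * Real.pi * ⟪η, x⟫) : ℂ) * Complex.I) * 𝓕 (⇑f) η) * g x) := by
        congr 1; funext x
        rw [hinv x, ← integral_mul_const, ← integral_const_mul]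
    _ = ∫ η : V m, ∫ x : V m,
        Complex.exp ((↑(-2 * Real.pi * ⟪x, ξ⟫) : ℂ) * Complex.I) *
          ((Complex.exp ((↑(2 * Real.pi * ⟪η, x⟫) : ℂ) * Complex.I) * 𝓕 (⇑f) η) * g x) :=
        integral_integral_swap hswap
    _ = ∫ η : V m, 𝓕 (⇑f) η * 𝓕 (⇑g) (ξ - η) := by
        congr 1; funext η
        have hstep : ∀ x : V m,
            Complex.exp ((↑(-2 * Real.pi * ⟪x, ξ⟫) : ℂ) * Complex.I) *
              ((Complex.exp ((↑(2 * Real.pi * ⟪η, x⟫) : ℂ) * Complex.I) * 𝓕 (⇑f) η) * g x)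
            = 𝓕 (⇑f) η *
              (Complex.exp ((↑(-2 * Real.pi * ⟪x, ξ - η⟫) : ℂ) * Complex.I) * g x) := by
          intro x
          have hAB : Complex.exp ((↑(-2 * Real.pi * ⟪x, ξ⟫) : ℂ) * Complex.I) *
              Complex.exp ((↑(2 * Real.pi * ⟪η, x⟫) : ℂ) * Complex.I)
              = Complex.exp ((↑(-2 * Real.pi * ⟪x, ξ - η⟫) : ℂ) * Complex.I) := by
            rw [← Complex.exp_add]
            congr 1
            rw [inner_sub_right, real_inner_comm η x]
            push_cast
            ring
          calc _ = (Complex.exp ((↑(-2 * Real.pi * ⟪x, ξ⟫) : ℂ) * Complex.I) *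
                Complex.exp ((↑(2 * Real.pi * ⟪η, x⟫) : ℂ) * Complex.I)) * (𝓕 (⇑f) η * g x) := by
                ring
            _ = _ := by rw [hAB]; ring
        simp_rw [hstep]
        rw [integral_const_mul]
        congr 1
        rw [Real.fourier_eq']
        simp_rw [smul_eq_mul]

end SCAux

namespace SCAux
open SchwartzMap

variable {B : Type*} [NormedRing B] [NormedAlgebra ℂ B] [CompleteSpace B] {m : ℕ}

lemma prod_integrable (b : Fin m → B) (hb : ∀ j, HasPolynomialGrowth (b j))
    (hcomm : ∀ i j, Commute (b i) (b j)) (f g : SchwartzMap (V m) ℂ) :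
    Integrable (Function.uncurry fun (η : V m) (ξ : V m) =>
      (𝓕 (⇑f) η * 𝓕 (⇑g) (ξ - η)) • expE b ξ) (volume.prod volume) := by
  obtain ⟨C, N, hC, hE⟩ := expE_bound b hb hcomm
  set Φf : SchwartzMap (V m) ℂ := SchwartzMap.fourierTransformCLM ℂ f with hΦf
  set Φg : SchwartzMap (V m) ℂ := SchwartzMap.fourierTransformCLM ℂ g with hΦg
  have hcf : 𝓕 (⇑f) = ⇑Φf := rfl
  have hcg : 𝓕 (⇑g) = ⇑Φg := rfl
  set F : V m → ℝ := fun η => (1 + ‖η‖) ^ N * ‖Φf η‖ with hF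
  set W : V m → ℝ := fun ζ => (1 + ‖ζ‖) ^ N * ‖Φg ζ‖ with hW
  have hFnn : ∀ η, 0 ≤ F η := fun η => by positivity
  have hWnn : ∀ ζ, 0 ≤ W ζ := fun ζ => by positivity
  have hF_int : Integrable F := poly_mul_schwartz_integrable Φf N
  have hW_int : Integrable W := poly_mul_schwartz_integrable Φg N
  have hFcont : Continuous F := by
    apply Continuous.mul _ Φf.continuous.norm
    exact (continuous_const.add continuous_norm).pow N
  have hWcont : Continuous W := by
    apply Continuous.mul _ Φg.continuous.norm
    exact (continuous_const.add continuous_norm).pow N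
  -- integrability of the dominating function on the product space
  have hdom : Integrable (fun p : V m × V m => F p.1 * W (p.2 - p.1))
      (volume.prod volume) := by
    have hmeas : AEStronglyMeasurable (fun p : V m × V m => F p.1 * W (p.2 - p.1))
        (volume.prod volume) :=
      ((hFcont.comp continuous_fst).mul
        (hWcont.comp (continuous_snd.sub continuous_fst))).aestronglyMeasurable
    rw [MeasureTheory.integrable_prod_iff hmeas]
    constructor
    · filter_upwards with η
      exact (hW_int.comp_sub_right η).const_mul (F η)
    · have heq : (fun η => ∫ ξ : V m, ‖F η * W (ξ - η)‖)
          = fun η => F η * ∫ ζ : V m, W ζ := by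
        funext η
        have h1 : ∀ ξ : V m, ‖F η * W (ξ - η)‖ = F η * W (ξ - η) := fun ξ =>
          Real.norm_of_nonneg (mul_nonneg (hFnn η) (hWnn _))
        simp_rw [h1]
        rw [MeasureTheory.integral_const_mul, integral_sub_right_eq_self W η]
      rw [heq]
      exact hF_int.mul_const _
  refine (hdom.const_mul C).mono' (Continuous.aestronglyMeasurable ?_) ?_
  · rw [hcf, hcg]
    exact ((Φf.continuous.comp continuous_fst).mul
      (Φg.continuous.comp (continuous_snd.sub continuous_fst))).smul
      ((expE_continuous b).comp continuous_snd)
  · filter_upwards with p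
    rw [Function.uncurry, hcf, hcg]
    simp only [norm_smul, norm_mul]
    have hnξ : ‖p.2‖ ≤ ‖p.1‖ + ‖p.2 - p.1‖ := by
      calc ‖p.2‖ = ‖p.1 + (p.2 - p.1)‖ := by rw [add_sub_cancel]
        _ ≤ ‖p.1‖ + ‖p.2 - p.1‖ := norm_add_le _ _
    have hsplit : (1 + ‖p.2‖) ^ N ≤ (1 + ‖p.1‖) ^ N * (1 + ‖p.2 - p.1‖) ^ N := by
      rw [← mul_pow]
      apply pow_le_pow_left₀ (by positivity)
      nlinarith [norm_nonneg p.1, norm_nonneg (p.2 - p.1)]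
    have hEb : ‖expE b p.2‖ ≤ C * ((1 + ‖p.1‖) ^ N * (1 + ‖p.2 - p.1‖) ^ N) :=
      (hE p.2).trans (by nlinarith)
    calc ‖Φf p.1‖ * ‖Φg (p.2 - p.1)‖ * ‖expE b p.2‖
        ≤ ‖Φf p.1‖ * ‖Φg (p.2 - p.1)‖ * (C * ((1 + ‖p.1‖) ^ N * (1 + ‖p.2 - p.1‖) ^ N)) := by
          apply mul_le_mul_of_nonneg_left hEb (by positivity)
      _ = C * (F p.1 * W (p.2 - p.1)) := by rw [hF, hW]; ring

end SCAux

namespace SCAux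
open SchwartzMap

variable {B : Type*} [NormedRing B] [NormedAlgebra ℂ B] [CompleteSpace B] {m : ℕ}

lemma multiplicative (b : Fin m → B) (hb : ∀ j, HasPolynomialGrowth (b j))
    (hcomm : ∀ i j, Commute (b i) (b j)) (f g h : SchwartzMap (V m) ℂ)
    (hfg : ∀ x, h x = f x * g x) :
    smoothCalc m b h = smoothCalc m b f * smoothCalc m b g := by
  have hTf := integrand_integrable b hb hcomm f
  have hTg := integrand_integrable b hb hcomm g
  have hsc : ∀ u : SchwartzMap (V m) ℂ,
      smoothCalc m b u = ∫ ξ : V m, (𝓕 (⇑u) ξ) • expE b ξ := fun u => rfl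
  set Tg : B := ∫ ζ : V m, (𝓕 (⇑g) ζ) • expE b ζ with hTgdef
  have step1 : smoothCalc m b f * smoothCalc m b g
      = ∫ η : V m, ((𝓕 (⇑f) η) • expE b η) * Tg := by
    rw [hsc f, hsc g, ← hTgdef]
    calc (∫ η : V m, (𝓕 (⇑f) η) • expE b η) * Tg
        = ((ContinuousLinearMap.mul ℂ B).flip Tg) (∫ η : V m, (𝓕 (⇑f) η) • expE b η) := rfl
      _ = ∫ η : V m, ((ContinuousLinearMap.mul ℂ B).flip Tg) ((𝓕 (⇑f) η) • expE b η) :=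
          (ContinuousLinearMap.integral_comp_comm _ hTf).symm
      _ = _ := rfl
  have step2 : ∀ η : V m, ((𝓕 (⇑f) η) • expE b η) * Tg
      = ∫ ζ : V m, ((𝓕 (⇑f) η) * 𝓕 (⇑g) ζ) • expE b (η + ζ) := by
    intro η
    rw [smul_mul_assoc]
    have h1 : expE b η * Tg = ∫ ζ : V m, (𝓕 (⇑g) ζ) • expE b (η + ζ) := by
      calc expE b η * Tg
          = (ContinuousLinearMap.mul ℂ B (expE b η)) Tg := rfl
        _ = ∫ ζ : V m, (ContinuousLinearMap.mul ℂ B (expE b η)) ((𝓕 (⇑g) ζ) • expE b ζ) :=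
            (ContinuousLinearMap.integral_comp_comm _ hTg).symm
        _ = ∫ ζ : V m, (𝓕 (⇑g) ζ) • expE b (η + ζ) := by
            congr 1; funext ζ
            show expE b η * ((𝓕 (⇑g) ζ) • expE b ζ) = _
            rw [mul_smul_comm, ← expE_add b hcomm η ζ]
    rw [h1, ← MeasureTheory.integral_smul]
    congr 1; funext ζ
    rw [smul_smul]
  have step4 : ∀ η : V m, (∫ ζ : V m, ((𝓕 (⇑f) η) * 𝓕 (⇑g) ζ) • expE b (η + ζ))
      = ∫ ξ : V m, ((𝓕 (⇑f) η) * 𝓕 (⇑g) (ξ - η)) • expE b ξ := by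
    intro η
    have := MeasureTheory.integral_add_left_eq_self (μ := volume)
      (fun ξ : V m => ((𝓕 (⇑f) η) * 𝓕 (⇑g) (ξ - η)) • expE b ξ) η
    simp only [add_sub_cancel_left] at this
    exact this
  calc smoothCalc m b h = ∫ ξ : V m, (𝓕 (⇑h) ξ) • expE b ξ := hsc h
    _ = ∫ ξ : V m, (∫ η : V m, (𝓕 (⇑f) η) * 𝓕 (⇑g) (ξ - η)) • expE b ξ := by
        congr 1; funext ξ
        rw [fourier_conv f g h hfg ξ]
    _ = ∫ ξ : V m, ∫ η : V m, ((𝓕 (⇑f) η) * 𝓕 (⇑g) (ξ - η)) • expE b ξ := by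
        congr 1; funext ξ
        rw [integral_smul_const]
    _ = ∫ η : V m, ∫ ξ : V m, ((𝓕 (⇑f) η) * 𝓕 (⇑g) (ξ - η)) • expE b ξ :=
        (MeasureTheory.integral_integral_swap (prod_integrable b hb hcomm f g)).symm
    _ = ∫ η : V m, ∫ ζ : V m, ((𝓕 (⇑f) η) * 𝓕 (⇑g) ζ) • expE b (η + ζ) := by
        congr 1; funext η
        exact (step4 η).symm
    _ = ∫ η : V m, ((𝓕 (⇑f) η) • expE b η) * Tg := by
        congr 1; funext η
        exact (step2 η).symm
    _ = smoothCalc m b f * smoothCalc m b g := step1.symm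

end SCAux

/-- For pairwise commuting polynomial growth elements, the integral defining the functional
calculus converges for every Schwartz function, and the calculus is multiplicative. -/
theorem smoothCalc_integrable_and_multiplicative
    {B : Type*} [NormedRing B] [NormedAlgebra ℂ B] [CompleteSpace B]
    (m : ℕ) (hm : 1 ≤ m) (b : Fin m → B)
    (hb : ∀ j, HasPolynomialGrowth (b j)) (hcomm : ∀ i j, Commute (b i) (b j)) :
    (∀ f : SchwartzMap (EuclideanSpace ℝ (Fin m)) ℂ,
      Integrable (fun ξ : EuclideanSpace ℝ (Fin m) =>
        (FourierTransform.fourier (⇑f) ξ) •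
          NormedSpace.exp ((2 * (Real.pi : ℂ) * Complex.I) • ∑ j, (ξ j : ℂ) • b j))) ∧
    (∀ f g h : SchwartzMap (EuclideanSpace ℝ (Fin m)) ℂ,
      (∀ x, h x = f x * g x) →
        smoothCalc m b h = smoothCalc m b f * smoothCalc m b g) :=
  ⟨fun f => SCAux.integrand_integrable b hb hcomm f,
   fun f g h hfg => SCAux.multiplicative b hb hcomm f g h hfg⟩
end
end

section
/- Let B be a complex unital Banach algebra, let m ≥ 1, and let b₁, …, b_m ∈ B be nilpotent elements (for each j there is n_j with b_j^{n_j} = 0). Let f : ℝᵐ → ℂ be a Schwartz function all of whose iterated derivatives vanish at the origin (i.e., the k-th iterated Fréchet derivative of f at 0 is 0 for every k ∈ ℕ, including f(0) = 0). Then ∫_{ℝᵐ} (𝓕f)(ξ) • ( exp(2πi ξ₁ b₁)·exp(2πi ξ₂ b₂)·…·exp(2πi ξ_m b_m) ) dξ = 0, where the factors are multiplied in increasing order of the index and 𝓕f(ξ) = ∫ f(x) e^{−2πi⟨x,ξ⟩} dx is the Fourier transform. -/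
noncomputable section

open MeasureTheory SchwartzMap Complex
open scoped FourierTransform RealInnerProductSpace Real

namespace OrderedCalcAux

variable {m : ℕ}

local notation "V" => EuclideanSpace ℝ (Fin m)

lemma fourier_pderiv (g : SchwartzMap V ℂ) (v : V) (ξ : V) :
    𝓕 (⇑(LineDeriv.lineDerivOp v g)) ξ =
      (2 * (π : ℂ) * Complex.I * ((⟪ξ, v⟫ : ℝ) : ℂ)) * 𝓕 (⇑g) ξ := by
  have hcoe : ⇑(SchwartzMap.fderivCLM ℝ V ℂ g) = fderiv ℝ ⇑g := by
    ext x : 1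
    exact SchwartzMap.fderivCLM_apply ℝ g x
  have hint : Integrable (fderiv ℝ ⇑g) volume := by
    rw [← hcoe]; exact (SchwartzMap.fderivCLM ℝ V ℂ g).integrable
  have key := Real.fourier_fderiv g.integrable g.differentiable hint
  have h1 : 𝓕 (⇑(LineDeriv.lineDerivOp v g)) ξ = 𝓕 (fderiv ℝ ⇑g) ξ v := by
    rw [Real.fourier_continuousLinearMap_apply hint]
    congr 1
  rw [h1, key]
  simp only [VectorFourier.fourierSMulRight_apply, ContinuousLinearMap.neg_apply,
    innerSL_apply_apply ℝ, real_inner_comm]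
  simp only [neg_smul, smul_neg, neg_neg, Complex.real_smul, smul_eq_mul]
  ring

/-- Iterated Schwartz partial derivative along a list of directions. -/
def SDer : List V → SchwartzMap V ℂ → SchwartzMap V ℂ
  | [], g => g
  | v :: L, g => LineDeriv.lineDerivOp v (SDer L g)

lemma fourier_SDer (L : List V) (g : SchwartzMap V ℂ) (ξ : V) :
    𝓕 (⇑(SDer L g)) ξ
      = (L.map fun v => 2 * (π : ℂ) * Complex.I * ((⟪ξ, v⟫ : ℝ) : ℂ)).prod * 𝓕 (⇑g) ξ := by
  induction L with
  | nil => simp [SDer]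
  | cons v L ih =>
      rw [show SDer (v :: L) g = LineDeriv.lineDerivOp v (SDer L g) from rfl,
        fourier_pderiv, ih, List.map_cons, List.prod_cons]
      ring

lemma SDer_eq_iteratedPDeriv (L : List V) (g : SchwartzMap V ℂ) :
    SDer L g = LineDeriv.iteratedLineDerivOp (fun i : Fin L.length => L.get i) g := by
  induction L with
  | nil => simp [SDer, LineDeriv.iteratedLineDerivOp_fin_zero]
  | cons v L ih =>
      rw [show SDer (v :: L) g = LineDeriv.lineDerivOp v (SDer L g) from rfl, ih,
        LineDeriv.iteratedLineDerivOp_succ_left]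
      congr 1

lemma SDer_apply_zero (f : SchwartzMap V ℂ)
    (hf : ∀ k : ℕ, iteratedFDeriv ℝ k (⇑f) 0 = 0) (L : List V) :
    SDer L f 0 = 0 := by
  rw [SDer_eq_iteratedPDeriv, SchwartzMap.iteratedLineDerivOp_eq_iteratedFDeriv, hf]
  rfl

lemma integral_fourier_eq (h : SchwartzMap V ℂ) : (∫ ξ : V, 𝓕 (⇑h) ξ) = h 0 := by
  have hcoe : ⇑(SchwartzMap.fourierTransformCLM ℝ h) = 𝓕 ⇑h := by
    ext x : 1
    rfl
  have h2 : Integrable (𝓕 ⇑h) volume := by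
    rw [← hcoe]; exact (SchwartzMap.fourierTransformCLM ℝ h).integrable
  have h0 := congrFun (Continuous.fourierInv_fourier_eq h.continuous h.integrable h2) 0
  rw [Real.fourierInv_eq] at h0
  simpa using h0

lemma moment_list (f : SchwartzMap V ℂ)
    (hf : ∀ k : ℕ, iteratedFDeriv ℝ k (⇑f) 0 = 0) (L : List (Fin m)) :
    ∫ ξ : V, (L.map fun j => ((ξ j : ℝ) : ℂ)).prod * 𝓕 (⇑f) ξ = 0 := by
  have key : (∫ ξ : V, 𝓕 (⇑(SDer (L.map fun j => EuclideanSpace.single j (1:ℝ)) f)) ξ) = 0 := by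
    rw [integral_fourier_eq, SDer_apply_zero f hf]
  have e1 : ∀ ξ : V, 𝓕 (⇑(SDer (L.map fun j => EuclideanSpace.single j (1:ℝ)) f)) ξ
      = (2 * (π : ℂ) * Complex.I) ^ L.length
        * ((L.map fun j => ((ξ j : ℝ) : ℂ)).prod * 𝓕 (⇑f) ξ) := by
    intro ξ
    rw [fourier_SDer, List.map_map]
    have h2 : ((fun v : V => 2 * (π : ℂ) * Complex.I * ((⟪ξ, v⟫ : ℝ) : ℂ))
        ∘ (fun j : Fin m => EuclideanSpace.single j (1:ℝ)))
        = fun j : Fin m => 2 * (π : ℂ) * Complex.I * ((ξ j : ℝ) : ℂ) := by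
      funext j
      simp [Function.comp, EuclideanSpace.inner_single_right]
    rw [h2]
    have h3 : (fun j : Fin m => 2 * (π : ℂ) * Complex.I * ((ξ j : ℝ) : ℂ))
        = fun j : Fin m => (fun _ : Fin m => 2 * (π : ℂ) * Complex.I) j
            * (fun j : Fin m => ((ξ j : ℝ) : ℂ)) j := rfl
    rw [h3, List.prod_map_mul]
    simp only [List.map_const', List.prod_replicate, List.length_map]
    ring
  simp_rw [e1, MeasureTheory.integral_const_mul] at key
  exact (mul_eq_zero.1 key).resolve_left (pow_ne_zero _
    (mul_ne_zero (mul_ne_zero two_ne_zero (Complex.ofReal_ne_zero.2 Real.pi_ne_zero))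
      Complex.I_ne_zero))

lemma moment_pow (f : SchwartzMap V ℂ)
    (hf : ∀ k : ℕ, iteratedFDeriv ℝ k (⇑f) 0 = 0) (α : Fin m → ℕ) :
    ∫ ξ : V, (∏ j, ((ξ j : ℝ) : ℂ) ^ (α j)) * 𝓕 (⇑f) ξ = 0 := by
  have key := moment_list f hf (List.ofFn fun j => List.replicate (α j) j).flatten
  have e : ∀ ξ : V, ((List.ofFn fun j => List.replicate (α j) j).flatten.map
      fun j => ((ξ j : ℝ) : ℂ)).prod = ∏ j, ((ξ j : ℝ) : ℂ) ^ (α j) := by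
    intro ξ
    rw [List.map_flatten, List.map_ofFn, List.prod_flatten, List.map_ofFn, List.prod_ofFn]
    simp [Function.comp, List.map_replicate, List.prod_replicate]
  simp_rw [e] at key
  exact key

lemma list_ofFn_prod_sum {B : Type*} [Ring B] :
    ∀ (M : ℕ) (n : Fin M → ℕ) (t : (j : Fin M) → ℕ → B),
    (List.ofFn fun j => ∑ k ∈ Finset.range (n j), t j k).prod
      = ∑ α ∈ Fintype.piFinset (fun j => Finset.range (n j)),
          (List.ofFn fun j => t j (α j)).prod := by
  intro M
  induction M with
  | zero => intro n t; simp
  | succ M ih =>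
      intro n t
      rw [List.ofFn_succ, List.prod_cons, ih (fun j => n j.succ) (fun j k => t j.succ k),
        Finset.sum_mul_sum, ← Finset.sum_product']
      refine Finset.sum_nbij' (fun p => Fin.cons p.1 p.2) (fun α => (α 0, Fin.tail α)) ?_ ?_ ?_ ?_ ?_
      · rintro ⟨k, β⟩ hp
        simp only [Finset.mem_product, Fintype.mem_piFinset] at hp
        rw [Fintype.mem_piFinset]
        intro j
        refine Fin.cases ?_ ?_ j
        · simpa using hp.1
        · intro i; simpa using hp.2 i
      · intro α hα
        simp only [Fintype.mem_piFinset] at hα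
        simp only [Finset.mem_product, Fintype.mem_piFinset]
        exact ⟨hα 0, fun i => hα i.succ⟩
      · rintro ⟨k, β⟩ _
        simp [Fin.tail_cons]
      · intro α _
        simp [Fin.cons_self_tail]
      · rintro ⟨k, β⟩ _
        rw [List.ofFn_succ, List.prod_cons]
        simp [Fin.cons_zero, Fin.cons_succ]

lemma list_ofFn_smul_prod {B : Type*} [Ring B] [Algebra ℂ B] :
    ∀ (M : ℕ) (c : Fin M → ℂ) (x : Fin M → B),
    (List.ofFn fun j => c j • x j).prod = (∏ j, c j) • (List.ofFn x).prod := by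
  intro M
  induction M with
  | zero => intro c x; simp
  | succ M ih =>
      intro c x
      rw [List.ofFn_succ, List.prod_cons, List.ofFn_succ (f := x), List.prod_cons,
        ih (fun j => c j.succ) (fun j => x j.succ), Fin.prod_univ_succ, smul_mul_smul_comm]

lemma exp_nilpotent_eq_sum {B : Type*} [NormedRing B] [NormedAlgebra ℂ B] [CompleteSpace B]
    (c : ℂ) (b : B) (n : ℕ) (hbn : b ^ n = 0) :
    NormedSpace.exp (c • b) = ∑ k ∈ Finset.range n, (((k.factorial : ℂ))⁻¹ * c ^ k) • b ^ k := by
  rw [NormedSpace.exp_eq_tsum ℂ]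
  show (∑' k : ℕ, ((k.factorial : ℂ))⁻¹ • (c • b) ^ k) = _
  rw [tsum_eq_sum (s := Finset.range n) ?_]
  · refine Finset.sum_congr rfl fun k _ => ?_
    rw [smul_pow, smul_smul]
  · intro k hk
    have hnk : n ≤ k := le_of_not_gt (by simpa using hk)
    have hz : b ^ k = 0 := by
      rw [← Nat.sub_add_cancel hnk, pow_add, hbn, mul_zero]
    rw [smul_pow, hz]
    simp

lemma abs_coord_le (ξ : V) (j : Fin m) : |ξ j| ≤ ‖ξ‖ := by
  have h := norm_inner_le_norm (𝕜 := ℝ) ξ (EuclideanSpace.single j (1 : ℝ))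
  simpa [EuclideanSpace.inner_single_right, EuclideanSpace.norm_single,
    Real.norm_eq_abs] using h

lemma integrable_aux (f : SchwartzMap V ℂ) (α : Fin m → ℕ) :
    Integrable (fun ξ : V => 𝓕 (⇑f) ξ *
      ∏ j, (((α j).factorial : ℂ))⁻¹
        * ((2 * (π : ℂ) * Complex.I) * ((ξ j : ℝ) : ℂ)) ^ (α j)) volume := by
  set F := SchwartzMap.fourierTransformCLM ℝ f with hFdef
  have hF : ⇑F = 𝓕 ⇑f := rfl
  set N := ∑ j, α j with hN
  set C : ℝ := ∏ j, (((α j).factorial : ℝ))⁻¹ * (2 * π) ^ (α j) with hC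
  refine Integrable.mono' ((F.integrable_pow_mul volume N).const_mul C)
    ?_ ?_
  · refine Continuous.aestronglyMeasurable (Continuous.mul ?_ ?_)
    · rw [← hF]; exact F.continuous
    · refine continuous_finset_prod _ fun j _ => Continuous.mul continuous_const ?_
      exact (Continuous.mul continuous_const
        (Complex.continuous_ofReal.comp (EuclideanSpace.proj j).continuous)).pow _
  · refine Filter.Eventually.of_forall fun ξ => ?_
    have hnorm : ‖𝓕 (⇑f) ξ * ∏ j, (((α j).factorial : ℂ))⁻¹
          * ((2 * (π : ℂ) * Complex.I) * ((ξ j : ℝ) : ℂ)) ^ (α j)‖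
        = ‖𝓕 (⇑f) ξ‖ * ∏ j, (((α j).factorial : ℝ))⁻¹ * (2 * π * |ξ j|) ^ (α j) := by
      rw [norm_mul, norm_prod]
      congr 1
      refine Finset.prod_congr rfl fun j _ => ?_
      rw [norm_mul, norm_pow, norm_inv, norm_mul, norm_mul, norm_mul]
      simp [Real.pi_nonneg, abs_of_nonneg, Complex.norm_real, Real.norm_eq_abs,
        _root_.abs_of_nonneg Real.pi_nonneg]
    rw [hnorm]
    have hle : ∏ j, (((α j).factorial : ℝ))⁻¹ * (2 * π * |ξ j|) ^ (α j)
        ≤ ∏ j, (((α j).factorial : ℝ))⁻¹ * (2 * π * ‖ξ‖) ^ (α j) := by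
      gcongr with j _
      · exact abs_coord_le ξ j
    calc ‖𝓕 (⇑f) ξ‖ * ∏ j, (((α j).factorial : ℝ))⁻¹ * (2 * π * |ξ j|) ^ (α j)
        ≤ ‖𝓕 (⇑f) ξ‖ * ∏ j, (((α j).factorial : ℝ))⁻¹ * (2 * π * ‖ξ‖) ^ (α j) := by
          exact mul_le_mul_of_nonneg_left hle (norm_nonneg _)
      _ = C * (‖ξ‖ ^ N * ‖F ξ‖) := by
          rw [hC, hN, hF]
          simp only [mul_pow, ← mul_assoc]
          rw [Finset.prod_mul_distrib, Finset.prod_pow_eq_pow_sum]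
          ring

end OrderedCalcAux

open OrderedCalcAux in
/-- Vanishing of the ordered functional calculus integral on Schwartz functions all of whose
derivatives vanish at the origin, for nilpotent elements `b₁, …, b_m`. -/
theorem integral_fourier_ordered_exp_prod_eq_zero_of_nilpotent
    {B : Type*} [NormedRing B] [NormedAlgebra ℂ B] [CompleteSpace B]
    (m : ℕ) (hm : 1 ≤ m) (b : Fin m → B) (hb : ∀ j, IsNilpotent (b j))
    (f : SchwartzMap (EuclideanSpace ℝ (Fin m)) ℂ)
    (hf : ∀ k : ℕ, iteratedFDeriv ℝ k (⇑f) 0 = 0) :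
    (∫ ξ : EuclideanSpace ℝ (Fin m),
      (FourierTransform.fourier (⇑f : EuclideanSpace ℝ (Fin m) → ℂ) ξ) •
        (List.ofFn fun j : Fin m =>
          NormedSpace.exp (((2 * (Real.pi : ℂ) * Complex.I) * (ξ j : ℂ)) • b j)).prod) = 0 := by
  classical
  have hbn : ∀ j, (b j) ^ (hb j).choose = 0 := fun j => (hb j).choose_spec
  set n : Fin m → ℕ := fun j => (hb j).choose with hn
  set A := Fintype.piFinset fun j : Fin m => Finset.range (n j) with hA
  set E : (Fin m → ℕ) → B := fun α => (List.ofFn fun j => (b j) ^ (α j)).prod with hE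
  set c : (Fin m → ℕ) → EuclideanSpace ℝ (Fin m) → ℂ := fun α ξ =>
    ∏ j, (((α j).factorial : ℂ))⁻¹
      * ((2 * (Real.pi : ℂ) * Complex.I) * ((ξ j : ℝ) : ℂ)) ^ (α j) with hc
  have hpt : ∀ ξ : EuclideanSpace ℝ (Fin m),
      (FourierTransform.fourier (⇑f : EuclideanSpace ℝ (Fin m) → ℂ) ξ) • (List.ofFn fun j : Fin m =>
          NormedSpace.exp (((2 * (Real.pi : ℂ) * Complex.I) * (ξ j : ℂ)) • b j)).prod
      = ∑ α ∈ A, ((𝓕 (⇑f) ξ) * c α ξ) • E α := by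
    intro ξ
    have h2 : (fun j : Fin m =>
        NormedSpace.exp (((2 * (Real.pi : ℂ) * Complex.I) * (ξ j : ℂ)) • b j))
        = fun j => ∑ k ∈ Finset.range (n j),
            (((k.factorial : ℂ))⁻¹
              * ((2 * (Real.pi : ℂ) * Complex.I) * ((ξ j : ℝ) : ℂ)) ^ k) • (b j) ^ k := by
      funext j
      exact exp_nilpotent_eq_sum _ _ _ (hbn j)
    rw [h2, list_ofFn_prod_sum m n (fun j k =>
      (((k.factorial : ℂ))⁻¹
        * ((2 * (Real.pi : ℂ) * Complex.I) * ((ξ j : ℝ) : ℂ)) ^ k) • (b j) ^ k),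
      Finset.smul_sum]
    refine Finset.sum_congr rfl fun α _ => ?_
    rw [list_ofFn_smul_prod m (fun j => ((α j).factorial : ℂ)⁻¹
        * ((2 * (Real.pi : ℂ) * Complex.I) * ((ξ j : ℝ) : ℂ)) ^ (α j))
      (fun j => (b j) ^ (α j)), smul_smul]
  have hint : ∀ α ∈ A, Integrable
      (fun ξ : EuclideanSpace ℝ (Fin m) => ((𝓕 (⇑f) ξ) * c α ξ) • E α) volume :=
    fun α _ => (integrable_aux f α).smul_const (E α)
  simp_rw [hpt]
  rw [integral_finset_sum A hint]
  refine Finset.sum_eq_zero fun α _ => ?_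
  rw [integral_smul_const]
  have hsplit : ∀ ξ : EuclideanSpace ℝ (Fin m), 𝓕 (⇑f) ξ * c α ξ
      = (∏ j, (((α j).factorial : ℂ))⁻¹ * (2 * (Real.pi : ℂ) * Complex.I) ^ (α j))
        * ((∏ j, ((ξ j : ℝ) : ℂ) ^ (α j)) * 𝓕 (⇑f) ξ) := by
    intro ξ
    rw [hc]
    simp only [mul_pow, ← mul_assoc]
    rw [Finset.prod_mul_distrib]
    ring
  simp_rw [hsplit, MeasureTheory.integral_const_mul]
  rw [moment_pow f hf α, mul_zero, zero_smul]
end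
end
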